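/- For n ≥ 3 and 2 ≤ i ≤ n−1, b(n,i,1) = b(n−1, i−1) + Σ_{d=2}^{i−1} c(n−i+d, d), where b(n−1,i−1) = Σ_{k≠i−1} b(n−1,k,i−1) and c(m,d) = Σ_{k≠d} c(m,k,d). -/

import Mathlib

open List

/-- `w` is a linear permutation of `[n] = {1,…,n}` written in one-line notation. -/
def IsPermOf (n : ℕ) (w : List ℕ) : Prop :=
  w.Perm ((List.range n).map (· + 1))

/-- occurrence of the vincular pattern 1̄2̄3 : positions a, a+1, c with c > a+1
forming an increasing triple. -/
def Occ123 (w : List ℕ) : Prop :=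
  ∃ a c, a + 1 < c ∧ c < w.length ∧
    w.getD a 0 < w.getD (a + 1) 0 ∧ w.getD (a + 1) 0 < w.getD c 0

/-- occurrence of the vincular pattern 41\overline{23} : positions a < b < c (and c+1)
with w_b < w_c < w_{c+1} < w_a. -/
def Occ4123 (w : List ℕ) : Prop :=
  ∃ a b c, a < b ∧ b < c ∧ c + 1 < w.length ∧
    w.getD b 0 < w.getD c 0 ∧ w.getD c 0 < w.getD (c + 1) 0 ∧
    w.getD (c + 1) 0 < w.getD a 0

/-- occurrence of the vincular pattern 1\overline{23} : positions a < b (and b+1)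
forming an increasing triple. -/
def Occ1_23 (w : List ℕ) : Prop :=
  ∃ a b, a < b ∧ b + 1 < w.length ∧
    w.getD a 0 < w.getD b 0 ∧ w.getD b 0 < w.getD (b + 1) 0

/-- occurrence of the vincular pattern \overline{23}41 : positions a, a+1, c, d with
a+1 < c < d and w_d < w_a < w_{a+1} < w_c. -/
def Occ2341 (w : List ℕ) : Prop :=
  ∃ a c d, a + 1 < c ∧ c < d ∧ d < w.length ∧
    w.getD d 0 < w.getD a 0 ∧ w.getD a 0 < w.getD (a + 1) 0 ∧
    w.getD (a + 1) 0 < w.getD c 0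

/-- a circular permutation (represented by any linear reading `w`) avoids
\overline{23}41 iff no cyclic rotation of `w` contains it. -/
def CircAvoids2341 (w : List ℕ) : Prop := ∀ k, ¬ Occ2341 (w.rotate k)

/-- the set `L_n` of linear permutations of `[n]` avoiding both 1̄2̄3 and 41\overline{23}. -/
def Lset (n : ℕ) : Set (List ℕ) :=
  {w | IsPermOf n w ∧ ¬ Occ123 w ∧ ¬ Occ4123 w}

/-- the permutation (n−1)(n−2)⋯1 n. -/
def excludedPerm (n : ℕ) : List ℕ :=
  ((List.range (n - 1)).map (· + 1)).reverse ++ [n]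

/-- `L_n^* = L_n \ {(n−1)(n−2)⋯1n}`. -/
def Lstar (n : ℕ) : Set (List ℕ) := Lset n \ {excludedPerm n}

/-- `B_n`: members of `L_n^*` in which 1 occurs to the right of n. -/
def Bset (n : ℕ) : Set (List ℕ) :=
  {w ∈ Lstar n | w.idxOf n < w.idxOf 1}

/-- `C_n`: members of `L_n^*` in which 1 occurs to the left of n and 2 to its right. -/
def Cset (n : ℕ) : Set (List ℕ) :=
  {w ∈ Lstar n | w.idxOf 1 < w.idxOf n ∧ w.idxOf n < w.idxOf 2}

/-- members of `B_n` ending in the two letters i, j. -/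
def Bnij (n i j : ℕ) : Set (List ℕ) :=
  {w ∈ Bset n | ∃ u, w = u ++ [i, j]}

/-- members of `C_n` ending in the two letters i, j. -/
def Cnij (n i j : ℕ) : Set (List ℕ) :=
  {w ∈ Cset n | ∃ u, w = u ++ [i, j]}

noncomputable def bcount (n i j : ℕ) : ℕ := (Bnij n i j).ncard
noncomputable def ccount (n i j : ℕ) : ℕ := (Cnij n i j).ncard

/-- `b(n,j)`: the number of members of `B_n` ending in the letter j. -/
noncomputable def bLast (n j : ℕ) : ℕ := Set.ncard {w ∈ Bset n | ∃ u, w = u ++ [j]}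

/-- `c(n,j)`: the number of members of `C_n` ending in the letter j. -/
noncomputable def cLast (n j : ℕ) : ℕ := Set.ncard {w ∈ Cset n | ∃ u, w = u ++ [j]}

/-- `V_n`: linear permutations of `[n]` avoiding both 1̄2̄3 and 1\overline{23}. -/
def Vset (n : ℕ) : Set (List ℕ) :=
  {w | IsPermOf n w ∧ ¬ Occ123 w ∧ ¬ Occ1_23 w}

/-- `v(n,j)`: the number of members of `V_n` ending in the letter j. -/
noncomputable def vcount (n j : ℕ) : ℕ := Set.ncard {w ∈ Vset n | ∃ u, w = u ++ [j]}

section Aux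

/-- combined avoidance -/
def avoid (w : List ℕ) : Prop := ¬ Occ123 w ∧ ¬ Occ4123 w

lemma getD_lt_iff_of_nodup {w : List ℕ} (hnd : w.Nodup) {j k : ℕ}
    (hj : j < w.length) (hk : k < w.length) (hjk : j ≠ k) :
    w.getD j 0 ≠ w.getD k 0 := by
  rw [List.getD_eq_getElem _ _ hj, List.getD_eq_getElem _ _ hk]
  intro h
  exact hjk (List.Nodup.getElem_inj_iff hnd |>.1 h)

/-- normal form of avoidance via ascents -/
lemma avoid_iff {w : List ℕ} (hnd : w.Nodup) :
    avoid w ↔ ∀ c, c + 1 < w.length → w.getD c 0 < w.getD (c+1) 0 →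
      (∀ j, c + 1 < j → j < w.length → w.getD j 0 < w.getD (c+1) 0) ∧
      (∀ a b, a < b → b < c → ¬ (w.getD b 0 < w.getD c 0 ∧ w.getD (c+1) 0 < w.getD a 0)) := by
  constructor
  · rintro ⟨h1, h2⟩ c hc hasc
    constructor
    · intro j hj hjl
      rcases lt_trichotomy (w.getD j 0) (w.getD (c+1) 0) with h | h | h
      · exact h
      · exact absurd h (getD_lt_iff_of_nodup hnd hjl (by omega) (by omega))
      · exact absurd ⟨c, j, by omega, hjl, hasc, h⟩ h1
    · rintro a b hab hbc ⟨hb, ha⟩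
      exact h2 ⟨a, b, c, hab, hbc, hc, hb, hasc, ha⟩
  · intro H
    constructor
    · rintro ⟨a, c, hac, hcl, h1, h2⟩
      have := (H a (by omega) h1).1 c hac hcl
      omega
    · rintro ⟨a, b, c, hab, hbc, hcl, h1, h2, h3⟩
      exact (H c hcl h2).2 a b hab hbc ⟨h1, h3⟩

/-- appending an element smaller than everything preserves avoidance, both ways -/
lemma avoid_append_min {w : List ℕ} {o : ℕ} (ho : ∀ x ∈ w, o < x) :
    avoid (w ++ [o]) ↔ avoid w := by
  have hlen : (w ++ [o]).length = w.length + 1 := by simp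
  have hD : ∀ j, j < w.length → (w ++ [o]).getD j 0 = w.getD j 0 := by
    intro j hj; exact List.getD_append _ _ _ _ hj
  have hDo : (w ++ [o]).getD w.length 0 = o := by
    rw [List.getD_eq_getElem _ _ (by simp)]
    simp
  have hmem : ∀ j, j < w.length → w.getD j 0 ∈ w := by
    intro j hj; rw [List.getD_eq_getElem _ _ hj]; exact List.getElem_mem _
  constructor
  · rintro ⟨h1, h2⟩
    constructor
    · rintro ⟨a, c, hac, hcl, p1, p2⟩
      exact h1 ⟨a, c, hac, by omega, by rwa [hD a (by omega), hD (a+1) (by omega)],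
        by rwa [hD (a+1) (by omega), hD c (by omega)]⟩
    · rintro ⟨a, b, c, hab, hbc, hcl, p1, p2, p3⟩
      exact h2 ⟨a, b, c, hab, hbc, by omega,
        by rwa [hD b (by omega), hD c (by omega)],
        by rwa [hD c (by omega), hD (c+1) (by omega)],
        by rwa [hD (c+1) (by omega), hD a (by omega)]⟩
  · rintro ⟨h1, h2⟩
    constructor
    · rintro ⟨a, c, hac, hcl, p1, p2⟩
      rw [hlen] at hcl
      rcases Nat.lt_or_ge c w.length with hc | hc
      · exact h1 ⟨a, c, hac, hc, by rwa [hD a (by omega), hD (a+1) (by omega)] at p1,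
          by rwa [hD (a+1) (by omega), hD c hc] at p2⟩
      · have hcw : c = w.length := by omega
        subst hcw
        rw [hDo, hD (a+1) (by omega)] at p2
        exact absurd p2 (by have := ho _ (hmem (a+1) (by omega)); omega)
    · rintro ⟨a, b, c, hab, hbc, hcl, p1, p2, p3⟩
      rw [hlen] at hcl
      rcases Nat.lt_or_ge (c+1) w.length with hc | hc
      · exact h2 ⟨a, b, c, hab, hbc, hc, by rwa [hD b (by omega), hD c (by omega)] at p1,
          by rwa [hD c (by omega), hD (c+1) (by omega)] at p2,
          by rwa [hD (c+1) (by omega), hD a (by omega)] at p3⟩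
      · have hcw : c + 1 = w.length := by omega
        rw [hcw, hDo, hD c (by omega)] at p2
        exact absurd p2 (by have := ho _ (hmem c (by omega)); omega)

/-- avoidance is invariant under maps that are strictly monotone on the entries -/
lemma avoid_map {w : List ℕ} {ρ : ℕ → ℕ}
    (hρ : ∀ x ∈ w, ∀ y ∈ w, x < y → ρ x < ρ y) :
    avoid (w.map ρ) ↔ avoid w := by
  have hlen : (w.map ρ).length = w.length := by simp
  have hD : ∀ j, j < w.length → (w.map ρ).getD j 0 = ρ (w.getD j 0) := by
    intro j hj
    rw [List.getD_eq_getElem _ _ (by simpa), List.getD_eq_getElem _ _ hj]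
    simp
  have hmem : ∀ j, j < w.length → w.getD j 0 ∈ w := by
    intro j hj; rw [List.getD_eq_getElem _ _ hj]; exact List.getElem_mem _
  have hiff : ∀ j k, j < w.length → k < w.length →
      ((w.map ρ).getD j 0 < (w.map ρ).getD k 0 ↔ w.getD j 0 < w.getD k 0) := by
    intro j k hj hk
    rw [hD j hj, hD k hk]
    constructor
    · intro h
      rcases lt_trichotomy (w.getD j 0) (w.getD k 0) with h' | h' | h'
      · exact h'
      · rw [h'] at h; omega
      · exact absurd (hρ _ (hmem k hk) _ (hmem j hj) h') (by omega)
    · exact hρ _ (hmem j hj) _ (hmem k hk)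
  have o123 : Occ123 (w.map ρ) ↔ Occ123 w := by
    constructor
    · rintro ⟨a, c, hac, hcl, p1, p2⟩
      rw [hlen] at hcl
      exact ⟨a, c, hac, hcl, (hiff _ _ (by omega) (by omega)).1 p1,
        (hiff _ _ (by omega) hcl).1 p2⟩
    · rintro ⟨a, c, hac, hcl, p1, p2⟩
      exact ⟨a, c, hac, by omega, (hiff _ _ (by omega) (by omega)).2 p1,
        (hiff _ _ (by omega) hcl).2 p2⟩
  have o4123 : Occ4123 (w.map ρ) ↔ Occ4123 w := by
    constructor
    · rintro ⟨a, b, c, hab, hbc, hcl, p1, p2, p3⟩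
      rw [hlen] at hcl
      exact ⟨a, b, c, hab, hbc, hcl, (hiff _ _ (by omega) (by omega)).1 p1,
        (hiff _ _ (by omega) (by omega)).1 p2, (hiff _ _ (by omega) (by omega)).1 p3⟩
    · rintro ⟨a, b, c, hab, hbc, hcl, p1, p2, p3⟩
      exact ⟨a, b, c, hab, hbc, by omega, (hiff _ _ (by omega) (by omega)).2 p1,
        (hiff _ _ (by omega) (by omega)).2 p2, (hiff _ _ (by omega) (by omega)).2 p3⟩
  unfold avoid
  rw [o123, o4123]

end Aux
lemma nodup_append_disj {l₁ l₂ : List ℕ} :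
    (l₁ ++ l₂).Nodup ↔ l₁.Nodup ∧ l₂.Nodup ∧ (∀ ⦃a⦄, a ∈ l₁ → a ∈ l₂ → False) := by
  rw [List.nodup_append]
  exact and_congr_right fun _ => and_congr_right fun _ =>
    ⟨fun h a ha hb => h a ha a hb rfl, fun h a ha b hb hab => h ha (hab ▸ hb)⟩

lemma eq_of_perm_of_sorted_old {l₁ l₂ : List ℕ} (hp : l₁.Perm l₂)
    (h1 : l₁.Pairwise (· > ·)) (h2 : l₂.Pairwise (· > ·)) : l₁ = l₂ :=
  List.Perm.eq_of_pairwise (fun a b _ _ hab hba => by omega) h1 h2 hp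

section StructB

/-- conditions on the pair (P, Q) characterizing avoidance of P ++ z :: N :: Q -/
def PQcond (P Q : List ℕ) : Prop :=
  ∀ c, c + 1 < Q.length → Q.getD c 0 < Q.getD (c+1) 0 →
    (∀ j, c + 1 < j → j < Q.length → Q.getD j 0 < Q.getD (c+1) 0) ∧
    (∀ b, b < c → ¬ (Q.getD b 0 < Q.getD c 0)) ∧
    (∀ p ∈ P, p < Q.getD (c+1) 0)

lemma avoid_structure {P Q : List ℕ} {z N : ℕ}
    (hnd : (P ++ z :: N :: Q).Nodup)
    (hPz : ∀ p ∈ P, z < p) (hQz : ∀ q ∈ Q, z < q)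
    (hPN : ∀ p ∈ P, p < N) (hQN : ∀ q ∈ Q, q < N) (hzN : z < N)
    (hPdesc : List.Pairwise (· > ·) P) :
    avoid (P ++ z :: N :: Q) ↔ PQcond P Q := by
  set w := P ++ z :: N :: Q with hw
  set L := P.length with hL
  have hlen : w.length = L + 2 + Q.length := by simp [hw]; omega
  have hDP : ∀ j, j < L → w.getD j 0 = P.getD j 0 := by
    intro j hj; exact List.getD_append _ _ _ _ hj
  have hDz : w.getD L 0 = z := by
    rw [hw, List.getD_append_right _ _ _ _ le_rfl]
    simp
  have hDN : w.getD (L+1) 0 = N := by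
    rw [hw, List.getD_append_right _ _ _ _ (by omega)]
    simp [hL, Nat.add_sub_cancel_left]
  have hDQ : ∀ j, L + 2 ≤ j → w.getD j 0 = Q.getD (j - (L+2)) 0 := by
    intro j hj
    rw [hw, List.getD_append_right _ _ _ _ (by omega)]
    have h2 : j - L = (j - L - 2) + 2 := by omega
    rw [h2]
    show (z :: N :: Q).getD _ 0 = _
    have : j - (L + 2) = j - L - 2 := by omega
    rw [this]
    rfl
  have memP : ∀ j, j < L → P.getD j 0 ∈ P := by
    intro j hj; rw [List.getD_eq_getElem _ _ hj]; exact List.getElem_mem _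
  have memQ : ∀ j, j < Q.length → Q.getD j 0 ∈ Q := by
    intro j hj; rw [List.getD_eq_getElem _ _ hj]; exact List.getElem_mem _
  have hdisj : ∀ p ∈ P, ∀ q ∈ Q, p ≠ q := by
    intro p hp q hq
    rcases nodup_append_disj.1 hnd with ⟨-, -, hd⟩
    intro he; subst he
    exact hd hp (by simp [hq])
  rw [avoid_iff hnd]
  constructor
  · -- avoidance → PQcond
    intro H c hc hasc
    have hcw : L + 2 + c + 1 < w.length := by omega
    have e1 : w.getD (L+2+c) 0 = Q.getD c 0 := by rw [hDQ _ (by omega)]; congr 1; omega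
    have e2 : w.getD (L+2+c+1) 0 = Q.getD (c+1) 0 := by rw [hDQ _ (by omega)]; congr 1; omega
    have Hc := H (L+2+c) hcw (by rw [e1, e2]; exact hasc)
    refine ⟨?_, ?_, ?_⟩
    · intro j hj hjl
      have := Hc.1 (L+2+j) (by omega) (by omega)
      rw [hDQ _ (by omega)] at this
      rw [e2] at this
      have hh : L + 2 + j - (L+2) = j := by omega
      rwa [hh] at this
    · intro b hb hlt
      have := Hc.2 (L+1) (L+2+b) (by omega) (by omega)
      rw [hDQ (L+2+b) (by omega), hDN, e1, e2] at this
      have hh : L + 2 + b - (L+2) = b := by omega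
      rw [hh] at this
      exact this ⟨hlt, hQN _ (memQ _ (by omega))⟩
    · intro p hp
      rcases List.mem_iff_getElem.1 hp with ⟨a, ha, hpa⟩
      have := Hc.2 a L (by omega) (by omega)
      rw [hDz, hDP a ha, e1, e2] at this
      rw [List.getD_eq_getElem _ _ ha] at this
      rw [hpa] at this
      have h1 : ¬ Q.getD (c+1) 0 < p := fun hlt => this ⟨hQz _ (memQ _ (by omega)), hlt⟩
      have h2 : p ≠ Q.getD (c+1) 0 := hdisj _ hp _ (memQ _ (by omega))
      omega
  · -- PQcond → avoidance
    intro H c hc hasc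
    rw [hlen] at hc
    rcases Nat.lt_or_ge (c+1) L with h1 | h1
    · -- both in P : descent, contradiction
      exfalso
      rw [hDP _ (by omega), hDP _ h1] at hasc
      have := List.pairwise_iff_getElem.1 hPdesc c (c+1) (by omega) h1 (by omega)
      rw [List.getD_eq_getElem _ _ (by omega), List.getD_eq_getElem _ _ h1] at hasc
      omega
    rcases Nat.lt_or_ge c L with h2 | h2
    · -- c = L - 1 : P-last followed by z, descent
      exfalso
      have hcL : c + 1 = L := by omega
      rw [hDP _ h2, hcL, hDz] at hasc
      exact absurd hasc (by have := hPz _ (memP c h2); omega)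
    rcases Nat.eq_or_lt_of_le h2 with h3 | h3
    · -- ascent (z, N)
      subst h3
      constructor
      · intro j hj hjl
        rw [hDN, hDQ j (by omega)]
        exact hQN _ (memQ _ (by rw [hlen] at hjl; omega))
      · rintro a b hab hbc ⟨hb, -⟩
        rw [hDz, hDP b (by omega)] at hb
        exact absurd hb (by have := hPz _ (memP b (by omega)); omega)
    rcases Nat.eq_or_lt_of_le h3 with h4 | h4
    · -- c = L + 1 : N followed by Q₀, descent
      exfalso
      have hc1 : c = L + 1 := by omega
      subst hc1
      rw [hDN, hDQ (L+1+1) (by omega)] at hasc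
      exact absurd hasc (by have := hQN _ (memQ (L+1+1-(L+2)) (by omega)); omega)
    -- ascent within Q
    have hcQ : L + 2 ≤ c := by omega
    set c' := c - (L+2) with hc'
    have e1 : w.getD c 0 = Q.getD c' 0 := hDQ c hcQ
    have e2 : w.getD (c+1) 0 = Q.getD (c'+1) 0 := by
      rw [hDQ (c+1) (by omega)]; congr 1; omega
    have hc'l : c' + 1 < Q.length := by omega
    rw [e1, e2] at hasc
    obtain ⟨HC1, HC2, HC3⟩ := H c' hc'l hasc
    constructor
    · intro j hj hjl
      rw [e2, hDQ j (by omega)]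
      exact HC1 _ (by omega) (by rw [hlen] at hjl; omega)
    · rintro a b hab hbc ⟨hb, ha⟩
      rcases Nat.lt_or_ge b L with hbL | hbL
      · -- b in P, so a in P : contradicts C3
        rw [hDP a (by omega), e2] at ha
        exact absurd ha (by have := HC3 _ (memP a (by omega)); omega)
      rcases Nat.eq_or_lt_of_le hbL with hbL2 | hbL2
      · -- b = L (value z), a in P : contradicts C3
        rw [hDP a (by omega), e2] at ha
        exact absurd ha (by have := HC3 _ (memP a (by omega)); omega)
      rcases Nat.eq_or_lt_of_le hbL2 with hbL3 | hbL3
      · -- b = L+1 (value N) : N < Q_c impossible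
        rw [← hbL3, hDN, e1] at hb
        exact absurd hb (by have := hQN _ (memQ c' (by omega)); omega)
      · -- b in Q : contradicts C2
        rw [hDQ b (by omega), e1] at hb
        exact HC2 _ (by omega) hb
    end StructB
section Helpers

lemma isPermOf_iff {n : ℕ} {w : List ℕ} :
    IsPermOf n w ↔ w.Nodup ∧ ∀ x, x ∈ w ↔ 1 ≤ x ∧ x ≤ n := by
  have hnd : ((List.range n).map (· + 1)).Nodup :=
    (List.nodup_range (n := n)).map (fun a b => by omega)
  have hmem : ∀ x, x ∈ (List.range n).map (· + 1) ↔ 1 ≤ x ∧ x ≤ n := by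
    intro x; simp [List.mem_map, List.mem_range]; constructor
    · rintro ⟨y, hy, rfl⟩; omega
    · rintro ⟨h1, h2⟩; exact ⟨x - 1, by omega, by omega⟩
  constructor
  · intro h
    refine ⟨h.nodup_iff.2 hnd, fun x => ?_⟩
    rw [h.mem_iff, hmem]
  · rintro ⟨h1, h2⟩
    rw [IsPermOf, List.perm_ext_iff_of_nodup h1 hnd]
    intro a; rw [h2, hmem]

lemma IsPermOf.len {n : ℕ} {w : List ℕ} (h : IsPermOf n w) : w.length = n := by
  have := h.length_eq; simpa using this

lemma isPermOf_of {n : ℕ} {w : List ℕ} (hnd : w.Nodup)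
    (hsub : ∀ x ∈ w, 1 ≤ x ∧ x ≤ n) (hlen : w.length = n) : IsPermOf n w := by
  rw [isPermOf_iff]
  refine ⟨hnd, fun x => ⟨fun hx => hsub x hx, fun hx => ?_⟩⟩
  -- counting argument
  by_contra hxw
  have hsubF : w.toFinset ⊆ (Finset.Icc 1 n).erase x := by
    intro y hy
    rw [List.mem_toFinset] at hy
    rcases hsub y hy with ⟨h1, h2⟩
    refine Finset.mem_erase.2 ⟨fun he => hxw (he ▸ hy), Finset.mem_Icc.2 ⟨h1, h2⟩⟩
  have hcard : w.toFinset.card = n := by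
    rw [List.toFinset_card_of_nodup hnd, hlen]
  have := Finset.card_le_card hsubF
  rw [hcard, Finset.card_erase_of_mem (Finset.mem_Icc.2 ⟨hx.1, hx.2⟩), Nat.card_Icc] at this
  omega

lemma mem_getD {w : List ℕ} {j : ℕ} (hj : j < w.length) : w.getD j 0 ∈ w := by
  rw [List.getD_eq_getElem _ _ hj]; exact List.getElem_mem _

lemma getD_ne_of_ne_idx {w : List ℕ} (hnd : w.Nodup) {j k : ℕ}
    (hj : j < w.length) (hk : k < w.length) (h : j ≠ k) : w.getD j 0 ≠ w.getD k 0 :=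
  getD_lt_iff_of_nodup hnd hj hk h

/-- all adjacent entries before the position of the maximum descend -/
lemma prefix_desc {w : List ℕ} {t : ℕ} (hnd : w.Nodup) (h123 : ¬ Occ123 w)
    (ht : t < w.length) (hM : ∀ j, j < w.length → j ≠ t → w.getD j 0 < w.getD t 0) :
    ∀ a, a + 1 < t → w.getD (a+1) 0 < w.getD a 0 := by
  intro a ha
  rcases lt_trichotomy (w.getD (a+1) 0) (w.getD a 0) with h | h | h
  · exact h
  · exact absurd h (getD_ne_of_ne_idx hnd (by omega) (by omega) (by omega))
  · exact absurd ⟨a, t, by omega, ht, h, hM (a+1) (by omega) (by omega)⟩ h123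

/-- chains of adjacent descents give full descent -/
lemma desc_chain {u : List ℕ} {t : ℕ}
    (hdesc : ∀ a, a + 1 < t → u.getD (a+1) 0 < u.getD a 0) :
    ∀ a b, a < b → b < t → u.getD b 0 < u.getD a 0 := by
  intro a b hab hbt
  induction b, hab using Nat.le_induction with
  | base => exact hdesc a hbt
  | succ b hb ih =>
      have h1 := ih (by omega)
      have h2 := hdesc b (by omega)
      omega

/-- key decomposition: if z is the minimum and N the maximum with z before N,
then w = P ++ z :: N :: Q with P strictly decreasing -/
lemma decomp_two {u : List ℕ} {z N : ℕ} (hnd : u.Nodup) (h123 : ¬ Occ123 u)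
    (hzu : z ∈ u) (hNu : N ∈ u)
    (hmax : ∀ x ∈ u, x ≠ N → x < N)
    (hzN : u.idxOf z < u.idxOf N)
    (hmin : ∀ x ∈ u, x ≠ z → z < x) :
    u = u.take (u.idxOf z) ++ z :: N :: u.drop (u.idxOf N + 1) ∧
    List.Pairwise (· > ·) (u.take (u.idxOf z)) ∧
    (∀ p ∈ u.take (u.idxOf z), z < p) ∧
    u.idxOf z + 1 = u.idxOf N := by
  set s := u.idxOf z with hs
  set t := u.idxOf N with htdef
  have hsl : s < u.length := List.idxOf_lt_length_iff.2 hzu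
  have htl : t < u.length := List.idxOf_lt_length_iff.2 hNu
  have hDz : u.getD s 0 = z := by
    rw [List.getD_eq_getElem _ _ hsl]; exact List.getElem_idxOf hsl
  have hDN : u.getD t 0 = N := by
    rw [List.getD_eq_getElem _ _ htl]; exact List.getElem_idxOf htl
  have hM : ∀ j, j < u.length → j ≠ t → u.getD j 0 < u.getD t 0 := by
    intro j hj hjt
    rw [hDN]
    refine hmax _ (mem_getD hj) ?_
    intro he
    exact hjt (by rw [← hnd.idxOf_getElem j hj, ← List.getD_eq_getElem _ _ hj, he, htdef])
  have hdesc := prefix_desc hnd h123 htl hM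
  have hst : s + 1 = t := by
    by_contra hc
    have h1 : s + 1 < t := by omega
    have h2 := hdesc s h1
    rw [hDz] at h2
    have hne : u.getD (s+1) 0 ≠ z := by
      have := getD_ne_of_ne_idx hnd (show s+1 < u.length by omega) hsl (by omega)
      rwa [hDz] at this
    have h3 := hmin _ (mem_getD (show s+1 < u.length by omega)) hne
    omega
  have hdecomp : u = u.take s ++ z :: N :: u.drop (t + 1) := by
    conv_lhs => rw [← List.take_append_drop s u]
    congr 1
    rw [List.drop_eq_getElem_cons hsl]
    congr 1
    · rw [← List.getD_eq_getElem _ _ hsl, hDz]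
    rw [show s + 1 = t from hst, List.drop_eq_getElem_cons htl]
    congr 1
    rw [← List.getD_eq_getElem _ _ htl, hDN]
  refine ⟨hdecomp, ?_, ?_, hst⟩
  · rw [List.pairwise_iff_getElem]
    intro a b ha hb hab
    have hlt : (u.take s).length = s := by
      rw [List.length_take]; omega
    rw [hlt] at ha hb
    have e1 : (u.take s)[a] = u.getD a 0 := by
      rw [List.getElem_take, List.getD_eq_getElem _ _ (show a < u.length by omega)]
    have e2 : (u.take s)[b] = u.getD b 0 := by
      rw [List.getElem_take, List.getD_eq_getElem _ _ (show b < u.length by omega)]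
    rw [e1, e2]
    exact desc_chain hdesc a b hab (by omega)
  · intro p hp
    rcases List.mem_iff_getElem.1 hp with ⟨j, hj, hpj⟩
    have hlt : (u.take s).length = s := by rw [List.length_take]; omega
    have hjs : j < s := hlt ▸ hj
    have e1 : (u.take s)[j] = u.getD j 0 := by
      rw [List.getElem_take, List.getD_eq_getElem _ _ (show j < u.length by omega)]
    rw [e1] at hpj
    subst hpj
    have hne : u.getD j 0 ≠ z := by
      have := getD_ne_of_ne_idx hnd (show j < u.length by omega) hsl (by omega)
      rwa [hDz] at this
    exact hmin _ (mem_getD (show j < u.length by omega)) hne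

lemma indexOf_map {f : ℕ → ℕ} (hf : Function.Injective f) (l : List ℕ) (a : ℕ) :
    (l.map f).idxOf (f a) = l.idxOf a := by
  induction l with
  | nil => simp
  | cons b t ih =>
      rcases eq_or_ne b a with rfl | hba
      · simp [List.idxOf_cons_self]
      · rw [List.map_cons, List.idxOf_cons_ne _ (fun h => hba (hf h)),
          List.idxOf_cons_ne _ hba, ih]

lemma last_eq_of_concat_eq' {u v : List ℕ} {a b : ℕ} (h : u ++ [a] = v ++ [b]) : a = b := by
  have := congrArg List.getLast? h
  rwa [List.getLast?_concat, List.getLast?_concat, Option.some_inj] at this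

lemma pair_suffix_inj {u v : List ℕ} {a b a' b' : ℕ}
    (h : u ++ [a, b] = v ++ [a', b']) : a = a' ∧ b = b' := by
  have h1 : (u ++ [a]) ++ [b] = (v ++ [a']) ++ [b'] := by simpa using h
  have hb := last_eq_of_concat_eq' h1
  subst hb
  have h2 : u ++ [a] = v ++ [a'] := by
    have := congrArg List.dropLast h1
    rwa [List.dropLast_concat, List.dropLast_concat] at this
  exact ⟨last_eq_of_concat_eq' h2, rfl⟩

lemma finite_of_subset_perm {n : ℕ} {S : Set (List ℕ)} (h : ∀ w ∈ S, IsPermOf n w) :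
    S.Finite := by
  refine Set.Finite.subset (List.finite_toSet (((List.range n).map (· + 1)).permutations)) ?_
  intro w hw
  simpa [List.mem_permutations, IsPermOf] using h w hw

lemma ncard_biUnion {A : Finset ℕ} {f : ℕ → Set (List ℕ)}
    (hfin : ∀ k ∈ A, (f k).Finite)
    (hdisj : ∀ k ∈ A, ∀ l ∈ A, k ≠ l → Disjoint (f k) (f l)) :
    (⋃ k ∈ A, f k).ncard = ∑ k ∈ A, (f k).ncard := by
  classical
  induction A using Finset.induction_on with
  | empty => simp
  | @insert a A ha ih =>
      have hfin' : ∀ k ∈ A, (f k).Finite := fun k hk => hfin k (Finset.mem_insert_of_mem hk)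
      have hdisj' : ∀ k ∈ A, ∀ l ∈ A, k ≠ l → Disjoint (f k) (f l) :=
        fun k hk l hl => hdisj k (Finset.mem_insert_of_mem hk) l (Finset.mem_insert_of_mem hl)
      have hfinU : (⋃ k ∈ A, f k).Finite := by
        rw [← Finset.set_biUnion_coe]
        exact Set.Finite.biUnion A.finite_toSet (by simpa using hfin')
      have hd : Disjoint (f a) (⋃ k ∈ A, f k) := by
        rw [Set.disjoint_iUnion₂_right]
        intro k hk
        exact hdisj a (Finset.mem_insert_self a A) k (Finset.mem_insert_of_mem hk)
          (fun he => ha (he ▸ hk))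
      rw [Finset.set_biUnion_insert, Set.ncard_union_eq ?_ (hfin a (Finset.mem_insert_self a A))
        hfinU, ih hfin' hdisj', Finset.sum_insert ha]
      · exact hd

/-- downward closed subsets of Icc 3 i are intervals -/
lemma mem_dc {i : ℕ} {S : Finset ℕ} (hsub : S ⊆ Finset.Icc 3 i)
    (hdc : ∀ x ∈ S, ∀ y, 3 ≤ y → y ≤ x → y ∈ S) :
    ∀ x, x ∈ S ↔ (3 ≤ x ∧ x ≤ i ∧ x ≤ S.card + 2) := by
  intro x
  constructor
  · intro hx
    rcases Finset.mem_Icc.1 (hsub hx) with ⟨h1, h2⟩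
    refine ⟨h1, h2, ?_⟩
    have hsub2 : Finset.Icc 3 x ⊆ S := by
      intro y hy
      rcases Finset.mem_Icc.1 hy with ⟨hy1, hy2⟩
      exact hdc x hx y hy1 hy2
    have := Finset.card_le_card hsub2
    rw [Nat.card_Icc] at this
    omega
  · rintro ⟨h1, h2, h3⟩
    by_contra hx
    have hsub2 : S ⊆ Finset.Icc 3 (x - 1) := by
      intro y hy
      rcases Finset.mem_Icc.1 (hsub hy) with ⟨hy1, hy2⟩
      refine Finset.mem_Icc.2 ⟨hy1, ?_⟩
      by_contra hyx
      exact hx (hdc y hy x h1 (by omega))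
    have := Finset.card_le_card hsub2
    rw [Nat.card_Icc] at this
    omega

end Helpers
section Term1

lemma mem_Bnij {n i j : ℕ} {w : List ℕ} : w ∈ Bnij n i j ↔
    (IsPermOf n w ∧ avoid w ∧ w ≠ excludedPerm n ∧ w.idxOf n < w.idxOf 1 ∧
      ∃ u, w = u ++ [i, j]) := by
  simp only [Bnij, Bset, Lstar, Lset, avoid, Set.mem_setOf_eq, Set.mem_diff,
    Set.mem_singleton_iff]
  tauto

lemma mem_Cnij {n i j : ℕ} {w : List ℕ} : w ∈ Cnij n i j ↔
    (IsPermOf n w ∧ avoid w ∧ w ≠ excludedPerm n ∧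
      w.idxOf 1 < w.idxOf n ∧ w.idxOf n < w.idxOf 2 ∧ ∃ u, w = u ++ [i, j]) := by
  simp only [Cnij, Cset, Lstar, Lset, avoid, Set.mem_setOf_eq, Set.mem_diff,
    Set.mem_singleton_iff]
  tauto

lemma ne_excluded_of_last {n a : ℕ} {w u : List ℕ} (hna : a ≠ n) (h : w = u ++ [a]) :
    w ≠ excludedPerm n := by
  intro he
  rw [excludedPerm] at he
  exact hna (last_eq_of_concat_eq' (h ▸ he))

/-- the target family for term 1 -/
def T1set (n i : ℕ) : Set (List ℕ) := {v ∈ Bset (n-1) | ∃ u, v = u ++ [i-1]}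

/-- the first part of B_{n,i,1} : those with 2 to the right of n -/
def S1set (n i : ℕ) : Set (List ℕ) := {w ∈ Bnij n i 1 | w.idxOf n < w.idxOf 2}

lemma mem_T1set {n i : ℕ} {v : List ℕ} : v ∈ T1set n i ↔
    (IsPermOf (n-1) v ∧ avoid v ∧ v ≠ excludedPerm (n-1) ∧
      v.idxOf (n-1) < v.idxOf 1 ∧ ∃ u, v = u ++ [i-1]) := by
  simp only [T1set, Bset, Lstar, Lset, avoid, Set.mem_setOf_eq, Set.mem_diff,
    Set.mem_singleton_iff]
  tauto

def g1 : List ℕ → List ℕ := fun v => v.map (· + 1) ++ [1]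
def f1 : List ℕ → List ℕ := fun w => w.dropLast.map (· - 1)

lemma term1_g1_mapsTo {n i : ℕ} (hn : 3 ≤ n) (hi2 : 2 ≤ i) (hi : i ≤ n - 1) :
    ∀ v ∈ T1set n i, g1 v ∈ S1set n i := by
  intro v hv
  obtain ⟨hperm, havd, hne, hidx, u, hu⟩ := mem_T1set.1 hv
  obtain ⟨hnd, hmem⟩ := isPermOf_iff.1 hperm
  have hlen : v.length = n - 1 := hperm.len
  have hmapmem : ∀ x ∈ v.map (· + 1), 2 ≤ x ∧ x ≤ n := by
    intro x hx
    rcases List.mem_map.1 hx with ⟨y, hy, rfl⟩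
    have := (hmem y).1 hy
    omega
  have h1nm : (1 : ℕ) ∉ v.map (· + 1) := fun h => by have := hmapmem 1 h; omega
  have hndm : (v.map (· + 1)).Nodup := hnd.map_on (fun x _ y _ h => by omega)
  have hwnd : (g1 v).Nodup := by
    rw [g1, nodup_append_disj]
    exact ⟨hndm, List.nodup_singleton 1, fun a ha hb => by
      simp at hb; subst hb; exact h1nm ha⟩
  constructor
  · rw [mem_Bnij]
    refine ⟨?_, ?_, ?_, ?_, ?_⟩
    · refine isPermOf_of hwnd ?_ ?_
      · intro x hx
        rcases List.mem_append.1 hx with h | h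
        · have := hmapmem x h; omega
        · simp at h; omega
      · rw [g1]
        simp only [List.length_append, List.length_map, List.length_cons, List.length_nil]
        omega
    · rw [g1]
      refine (avoid_append_min ?_).2 ((avoid_map ?_).2 havd)
      · intro x hx; exact (hmapmem x hx).1
      · intro x _ y _ h; omega
    · exact ne_excluded_of_last (by omega) rfl
    · have hidx1 : (g1 v).idxOf 1 = (v.map (· + 1)).length := by
        rw [g1, List.idxOf_append_of_notMem h1nm]
        simp
      have hnin : n ∈ v.map (· + 1) := by
        refine List.mem_map.2 ⟨n - 1, (hmem (n-1)).2 ⟨by omega, le_rfl⟩, by omega⟩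
      have : (g1 v).idxOf n < (v.map (· + 1)).length := by
        rw [g1, List.idxOf_append_of_mem hnin]
        exact List.idxOf_lt_length_iff.2 hnin
      omega
    · refine ⟨u.map (· + 1), ?_⟩
      rw [g1, hu, List.map_append]
      simp only [List.map_cons, List.map_nil, List.append_assoc, List.cons_append,
        List.nil_append]
      rw [show i - 1 + 1 = i by omega]
  · -- indexOf n < indexOf 2
    have h2v : (1:ℕ) ∈ v := (hmem 1).2 ⟨le_rfl, by omega⟩
    have hvn : (n-1 : ℕ) ∈ v := (hmem (n-1)).2 ⟨by omega, le_rfl⟩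
    have e1 : (g1 v).idxOf n = v.idxOf (n-1) := by
      rw [g1, List.idxOf_append_of_mem (List.mem_map.2 ⟨n-1, hvn, by omega⟩)]
      have h := indexOf_map (f := (· + 1)) (fun a b h => by simpa using h) v (n-1)
      rw [show n - 1 + 1 = n by omega] at h
      exact h
    have e2 : (g1 v).idxOf 2 = v.idxOf 1 := by
      rw [g1, List.idxOf_append_of_mem (List.mem_map.2 ⟨1, h2v, by omega⟩)]
      have h := indexOf_map (f := (· + 1)) (fun a b h => by simpa using h) v 1
      norm_num at h
      exact h
    rw [e1, e2]
    exact hidx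

lemma term1_f1_mapsTo {n i : ℕ} (hn : 3 ≤ n) (hi2 : 2 ≤ i) (hi : i ≤ n - 1) :
    ∀ w ∈ S1set n i, f1 w ∈ T1set n i := by
  rintro w ⟨hw, hidx2⟩
  obtain ⟨hperm, havd, hne, hidx, u, hu⟩ := mem_Bnij.1 hw
  obtain ⟨hnd, hmem⟩ := isPermOf_iff.1 hperm
  have hlen : w.length = n := hperm.len
  set u1 : List ℕ := u ++ [i] with hu1
  have hw1 : w = u1 ++ [1] := by rw [hu, hu1]; simp
  have hnd1 : u1.Nodup ∧ (1:ℕ) ∉ u1 := by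
    rw [hw1, nodup_append_disj] at hnd
    exact ⟨hnd.1, fun h => hnd.2.2 h (by simp)⟩
  have hmem1 : ∀ x ∈ u1, 2 ≤ x ∧ x ≤ n := by
    intro x hx
    have hxw : x ∈ w := by rw [hw1]; exact List.mem_append_left _ hx
    have h1 := (hmem x).1 hxw
    have : x ≠ 1 := fun he => hnd1.2 (he ▸ hx)
    omega
  have hfw : f1 w = u1.map (· - 1) := by
    rw [f1, hw1, List.dropLast_concat]
  have hback : (u1.map (· - 1)).map (· + 1) = u1 := by
    rw [List.map_map]
    conv_rhs => rw [← List.map_id u1]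
    refine List.map_congr_left (fun x hx => ?_)
    have := hmem1 x hx
    simp; omega
  rw [mem_T1set, hfw]
  have hndm : (u1.map (· - 1)).Nodup :=
    hnd1.1.map_on (fun x hx y hy h => by
      have := hmem1 x hx; have := hmem1 y hy; omega)
  refine ⟨?_, ?_, ?_, ?_, ?_⟩
  · refine isPermOf_of hndm ?_ ?_
    · intro x hx
      rcases List.mem_map.1 hx with ⟨y, hy, rfl⟩
      have := hmem1 y hy; omega
    · have : w.length = u1.length + 1 := by rw [hw1]; simp
      simp only [List.length_map]; omega
  · refine (avoid_map ?_).2 ((avoid_append_min ?_).1 (hw1 ▸ havd))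
    · intro x hx y hy h
      have := hmem1 x hx; have := hmem1 y hy; omega
    · intro x hx; exact (hmem1 x hx).1
  · refine ne_excluded_of_last (u := u.map (· - 1)) (show i - 1 ≠ n - 1 by omega) ?_
    rw [hu1]
    simp
  · -- index transfer
    have h2w : (2:ℕ) ∈ w := (hmem 2).2 ⟨by omega, by omega⟩
    have hnw : (n:ℕ) ∈ w := (hmem n).2 ⟨by omega, le_rfl⟩
    have h2u : (2:ℕ) ∈ u1 := by
      rw [hw1] at h2w
      rcases List.mem_append.1 h2w with h | h
      · exact h
      · simp at h
    have hnu : (n:ℕ) ∈ u1 := by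
      rw [hw1] at hnw
      rcases List.mem_append.1 hnw with h | h
      · exact h
      · simp at h; omega
    have ew2 : w.idxOf 2 = u1.idxOf 2 := by rw [hw1, List.idxOf_append_of_mem h2u]
    have ewn : w.idxOf n = u1.idxOf n := by rw [hw1, List.idxOf_append_of_mem hnu]
    have t1 := indexOf_map (f := (· + 1)) (fun a b h => by simpa using h) (u1.map (· - 1)) (n - 1)
    rw [hback] at t1
    rw [show n - 1 + 1 = n by omega] at t1
    have t2 := indexOf_map (f := (· + 1)) (fun a b h => by simpa using h) (u1.map (· - 1)) 1
    rw [hback] at t2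
    norm_num at t2
    omega
  · refine ⟨u.map (· - 1), ?_⟩
    rw [hu1]
    simp

lemma term1_invOn {n i : ℕ} (hn : 3 ≤ n) (hi2 : 2 ≤ i) (hi : i ≤ n - 1) :
    Set.InvOn f1 g1 (T1set n i) (S1set n i) := by
  constructor
  · intro v _
    rw [g1, f1, List.dropLast_concat, List.map_map]
    conv_rhs => rw [← List.map_id v]
    exact List.map_congr_left (fun x _ => by simp)
  · rintro w ⟨hw, _⟩
    obtain ⟨hperm, havd, hne, hidx, u, hu⟩ := mem_Bnij.1 hw
    obtain ⟨hnd, hmem⟩ := isPermOf_iff.1 hperm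
    set u1 : List ℕ := u ++ [i] with hu1
    have hw1 : w = u1 ++ [1] := by rw [hu, hu1]; simp
    have hnd1 : (1:ℕ) ∉ u1 := by
      rw [hw1, nodup_append_disj] at hnd
      exact fun h => hnd.2.2 h (by simp)
    have hmem1 : ∀ x ∈ u1, 2 ≤ x := by
      intro x hx
      have hxw : x ∈ w := by rw [hw1]; exact List.mem_append_left _ hx
      have h1 := (hmem x).1 hxw
      have : x ≠ 1 := fun he => hnd1 (he ▸ hx)
      omega
    rw [g1, f1, hw1, List.dropLast_concat, List.map_map]
    congr 1
    conv_rhs => rw [← List.map_id u1]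
    refine List.map_congr_left (fun x hx => ?_)
    have := hmem1 x hx
    simp; omega

lemma term1_count {n i : ℕ} (hn : 3 ≤ n) (hi2 : 2 ≤ i) (hi : i ≤ n - 1) :
    (S1set n i).ncard = ∑ k ∈ (Finset.Icc 1 (n - 1)).erase (i - 1), bcount (n - 1) k (i - 1) := by
  have hbij : Set.BijOn g1 (T1set n i) (S1set n i) :=
    (term1_invOn hn hi2 hi).bijOn (term1_g1_mapsTo hn hi2 hi) (term1_f1_mapsTo hn hi2 hi)
  have h1 : (S1set n i).ncard = (T1set n i).ncard := by
    rw [← hbij.image_eq, Set.ncard_image_of_injOn hbij.injOn]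
  rw [h1]
  have hdecomp : T1set n i = ⋃ k ∈ (Finset.Icc 1 (n-1)).erase (i-1), Bnij (n-1) k (i-1) := by
    ext v
    simp only [Set.mem_iUnion, exists_prop]
    constructor
    · intro hv
      obtain ⟨hperm, havd, hne, hidx, u, hu⟩ := mem_T1set.1 hv
      obtain ⟨hnd, hmem⟩ := isPermOf_iff.1 hperm
      have hlen : v.length = n - 1 := hperm.len
      have hunil : u ≠ [] := by
        intro h
        rw [h] at hu
        rw [hu] at hlen
        simp at hlen
        omega
      rcases List.eq_nil_or_concat u with h | ⟨u0, k, hk⟩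
      · exact absurd h hunil
      refine ⟨k, ?_, ?_⟩
      · have hkv : k ∈ v := by rw [hu, hk]; simp
        have hbound := (hmem k).1 hkv
        have hki : k ≠ i - 1 := by
          have : v = u0 ++ [k, i-1] := by rw [hu, hk]; simp
          rw [this] at hnd
          have hsl : [k, i-1].Sublist (u0 ++ [k, i-1]) := List.sublist_append_right u0 _
          have := hsl.nodup hnd
          simp at this
          exact this
        exact Finset.mem_erase.2 ⟨hki, Finset.mem_Icc.2 hbound⟩
      · rw [mem_Bnij]
        exact ⟨hperm, havd, hne, hidx, u0, by rw [hu, hk]; simp⟩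
    · rintro ⟨k, hk, hv⟩
      obtain ⟨hperm, havd, hne, hidx, u, hu⟩ := mem_Bnij.1 hv
      rw [mem_T1set]
      exact ⟨hperm, havd, hne, hidx, u ++ [k], by rw [hu]; simp⟩
  rw [hdecomp, ncard_biUnion]
  · rfl
  · intro k _
    exact finite_of_subset_perm (fun w hw => (mem_Bnij.1 hw).1)
  · intro k _ l _ hkl
    rw [Set.disjoint_left]
    intro w hwk hwl
    obtain ⟨_, _, _, _, u, hu⟩ := mem_Bnij.1 hwk
    obtain ⟨_, _, _, _, u', hu'⟩ := mem_Bnij.1 hwl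
    exact hkl (pair_suffix_inj (hu ▸ hu')).1

end Term1
section Term2Defs

def goodUpTo (w : List ℕ) (x : ℕ) : Prop :=
  ∀ y ∈ Finset.Icc 3 x, w.idxOf y < w.idxOf 2

instance goodUpTo.dec (w : List ℕ) : DecidablePred (goodUpTo w) :=
  fun _ => Finset.decidableDforallFinset

def estat (i : ℕ) (w : List ℕ) : ℕ := ((Finset.Icc 3 i).filter (goodUpTo w)).card

/-- members of B_{n,i,1} with 2 left of n and statistic corresponding to d -/
def S2dset (n i d : ℕ) : Set (List ℕ) :=
  {w ∈ Bnij n i 1 | w.idxOf 2 < w.idxOf n ∧ estat i w = i - 1 - d}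

/-- members of C_m ending in d -/
def CdTot (m d : ℕ) : Set (List ℕ) := {c ∈ Cset m | ∃ u, c = u ++ [d]}

lemma mem_CdTot {m d : ℕ} {c : List ℕ} : c ∈ CdTot m d ↔
    (IsPermOf m c ∧ avoid c ∧ c ≠ excludedPerm m ∧
      c.idxOf 1 < c.idxOf m ∧ c.idxOf m < c.idxOf 2 ∧ ∃ u, c = u ++ [d]) := by
  simp only [CdTot, Cset, Lstar, Lset, avoid, Set.mem_setOf_eq, Set.mem_diff,
    Set.mem_singleton_iff]
  tauto

/-- the descending block s+1, s, ..., 3 -/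
def blockL (s : ℕ) : List ℕ := (List.range (s-1)).map (fun j => s + 1 - j)

lemma blockL_length {s : ℕ} : (blockL s).length = s - 1 := by simp [blockL]

lemma mem_blockL {s x : ℕ} (hs : 1 ≤ s) : x ∈ blockL s ↔ 3 ≤ x ∧ x ≤ s + 1 := by
  simp only [blockL, List.mem_map, List.mem_range]
  constructor
  · rintro ⟨j, hj, rfl⟩; omega
  · rintro ⟨h1, h2⟩; exact ⟨s + 1 - x, by omega, by omega⟩

lemma blockL_pairwise {s : ℕ} : List.Pairwise (· > ·) (blockL s) := by
  rw [List.pairwise_iff_getElem]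
  intro a b ha hb hab
  simp only [blockL, List.length_map, List.length_range] at ha hb
  simp only [blockL, List.getElem_map, List.getElem_range]
  omega

lemma blockL_nodup {s : ℕ} : (blockL s).Nodup :=
  blockL_pairwise.imp (fun h => Nat.ne_of_gt h)

def ρf (s : ℕ) : ℕ → ℕ := fun x => if x ≤ 1 then x + 1 else x + s

lemma ρf_strictMono {s : ℕ} (hs : 1 ≤ s) : StrictMono (ρf s) := by
  intro x y hxy
  simp only [ρf]
  split <;> split <;> omega

lemma ρf_big {s x : ℕ} (hx : 2 ≤ x) : ρf s x = x + s := by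
  simp only [ρf]; rw [if_neg (by omega)]

lemma ρf_one {s : ℕ} : ρf s 1 = 2 := by simp [ρf]

/-- transfer of PQcond along a value-monotone map of Q -/
lemma PQcond_map {P Q P' : List ℕ} {σ : ℕ → ℕ}
    (hmono : ∀ x ∈ Q, ∀ y ∈ Q, (x < y ↔ σ x < σ y))
    (hP' : ∀ p' ∈ P', ∀ c, c + 1 < Q.length → Q.getD c 0 < Q.getD (c+1) 0 →
      p' < σ (Q.getD (c+1) 0))
    (h : PQcond P Q) : PQcond P' (Q.map σ) := by
  intro c hc hasc
  have hlen : (Q.map σ).length = Q.length := by simp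
  rw [hlen] at hc
  have hD : ∀ j, j < Q.length → (Q.map σ).getD j 0 = σ (Q.getD j 0) := by
    intro j hj
    rw [List.getD_eq_getElem _ _ (by simpa), List.getD_eq_getElem _ _ hj]
    simp
  have hasc' : Q.getD c 0 < Q.getD (c+1) 0 := by
    rw [hD c (by omega), hD (c+1) (by omega)] at hasc
    exact (hmono _ (mem_getD (by omega)) _ (mem_getD (by omega))).2 hasc
  obtain ⟨C1, C2, C3⟩ := h c hc hasc'
  refine ⟨?_, ?_, ?_⟩
  · intro j hj hjl
    rw [hlen] at hjl
    rw [hD j hjl, hD (c+1) (by omega)]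
    exact (hmono _ (mem_getD hjl) _ (mem_getD (by omega))).1 (C1 j hj hjl)
  · intro b hb hlt
    rw [hD b (by omega), hD c (by omega)] at hlt
    exact C2 b hb ((hmono _ (mem_getD (by omega)) _ (mem_getD (by omega))).2 hlt)
  · intro p hp
    rw [hD (c+1) (by omega)]
    exact hP' p hp c hc hasc'

/-- decomposition of a member of CdTot -/
lemma C_decomp {m d : ℕ} {c : List ℕ} (hm : 3 ≤ m) (hd2 : 2 ≤ d) (hdm : d ≤ m - 1)
    (hc : c ∈ CdTot m d) :
    ∃ γ R, c = γ ++ 1 :: m :: R ∧ List.Pairwise (· > ·) γ ∧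
      (∀ p ∈ γ, 3 ≤ p ∧ p ≤ m - 1) ∧ (∀ q ∈ R, 2 ≤ q ∧ q ≤ m - 1) ∧
      (2:ℕ) ∈ R ∧ (∃ R₀, R = R₀ ++ [d]) ∧ PQcond γ R := by
  obtain ⟨hperm, havd, hne, h1m, hm2, u, hu⟩ := mem_CdTot.1 hc
  obtain ⟨hnd, hmem⟩ := isPermOf_iff.1 hperm
  have hlen : c.length = m := hperm.len
  have h1c : (1:ℕ) ∈ c := (hmem 1).2 ⟨le_rfl, by omega⟩
  have hmc : (m:ℕ) ∈ c := (hmem m).2 ⟨by omega, le_rfl⟩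
  have h2c : (2:ℕ) ∈ c := (hmem 2).2 ⟨by omega, by omega⟩
  obtain ⟨hdecomp, hpw, hgt, hst⟩ := decomp_two hnd havd.1 h1c hmc
    (fun x hx hxm => lt_of_le_of_ne ((hmem x).1 hx).2 hxm) h1m
    (fun x hx hx1 => by have := (hmem x).1 hx; omega)
  set γ := c.take (c.idxOf 1) with hγ
  set R := c.drop (c.idxOf m + 1) with hR
  have hidx1 : c.idxOf 1 = γ.length := by
    rw [hγ, List.length_take]
    have := List.idxOf_lt_length_iff.2 h1c
    omega
  -- index computations from the decomposition
  have hidxm : c.idxOf m = γ.length + 1 := by omega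
  have hγmem : ∀ p ∈ γ, 3 ≤ p ∧ p ≤ m - 1 := by
    intro p hp
    have hpc : p ∈ c := by rw [hdecomp]; exact List.mem_append_left _ hp
    have hb := (hmem p).1 hpc
    have hp1 : 1 < p := hgt p hp
    have hidxp : c.idxOf p < γ.length := by
      conv_lhs => rw [hdecomp]
      rw [List.idxOf_append_of_mem hp]
      exact List.idxOf_lt_length_iff.2 hp
    have hpm : p ≠ m := by
      intro he; rw [he] at hidxp; omega
    have hp2 : p ≠ 2 := by
      intro he; rw [he] at hidxp; omega
    omega
  have hnd2 : (γ ++ 1 :: m :: R).Nodup := hdecomp ▸ hnd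
  obtain ⟨hndγ, hndr, hdisjγ⟩ := nodup_append_disj.1 hnd2
  have h1nR : (1:ℕ) ∉ R := fun h => (List.nodup_cons.1 hndr).1 (by simp [h])
  have hmnR : (m:ℕ) ∉ R := fun h =>
    (List.nodup_cons.1 (List.nodup_cons.1 hndr).2).1 h
  have hRmem : ∀ q ∈ R, 2 ≤ q ∧ q ≤ m - 1 := by
    intro q hq
    have hqc : q ∈ c := by
      rw [hdecomp]
      exact List.mem_append_right _ (by simp [hq])
    have hb := (hmem q).1 hqc
    have hq1 : q ≠ 1 := fun he => h1nR (he ▸ hq)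
    have hqm : q ≠ m := fun he => hmnR (he ▸ hq)
    omega
  have h2R : (2:ℕ) ∈ R := by
    rw [hdecomp] at h2c
    rcases List.mem_append.1 h2c with h | h
    · exact absurd (hγmem 2 h).1 (by omega)
    · rcases List.mem_cons.1 h with h | h
      · omega
      · rcases List.mem_cons.1 h with h | h
        · omega
        · exact h
  have hRd : ∃ R₀, R = R₀ ++ [d] := by
    rcases List.eq_nil_or_concat R with h | ⟨R₀, a, ha⟩
    · exfalso
      rw [h] at hdecomp
      have : c = (γ ++ [1]) ++ [m] := by rw [hdecomp]; simp
      rw [this] at hu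
      have := last_eq_of_concat_eq' hu.symm
      omega
    · refine ⟨R₀, ?_⟩
      rw [ha] at hdecomp
      have : c = (γ ++ 1 :: m :: R₀) ++ [a] := by rw [hdecomp]; simp
      rw [this] at hu
      have := last_eq_of_concat_eq' hu.symm
      rw [ha, this]
      simp
  refine ⟨γ, R, hdecomp, hpw, hγmem, hRmem, h2R, hRd, ?_⟩
  · refine (avoid_structure (P := γ) (Q := R) (z := 1) (N := m) (hdecomp ▸ hnd) hgt
      (fun q hq => by have := hRmem q hq; omega)
      (fun p hp => by have := hγmem p hp; omega)
      (fun q hq => by have := hRmem q hq; omega) (by omega) hpw).1 (hdecomp ▸ havd)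

end Term2Defs
section Term2Struct

lemma S2_decomp {n i : ℕ} (hn : 3 ≤ n) (hi2 : 2 ≤ i) (hi : i ≤ n - 1) {w : List ℕ}
    (hw : w ∈ Bnij n i 1) (h2n : w.idxOf 2 < w.idxOf n) :
    3 ≤ i ∧ ∃ P R, w = P ++ 2 :: n :: ((R ++ [i]) ++ [1]) ∧
      List.Pairwise (· > ·) P ∧
      (∀ p ∈ P, 3 ≤ p ∧ p ≤ n - 1) ∧
      (∀ q ∈ R ++ [i], 3 ≤ q ∧ q ≤ n - 1) ∧
      PQcond P (R ++ [i]) ∧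
      w.idxOf 2 = P.length ∧
      (∀ y, 3 ≤ y → y ≤ n → (w.idxOf y < w.idxOf 2 ↔ y ∈ P)) := by
  obtain ⟨hperm, havd, hne, hidx, u, hu⟩ := mem_Bnij.1 hw
  obtain ⟨hnd, hmem⟩ := isPermOf_iff.1 hperm
  have hlen : w.length = n := hperm.len
  set u1 : List ℕ := u ++ [i] with hu1
  have hw1 : w = u1 ++ [1] := by rw [hu, hu1]; simp
  have h1nu : (1:ℕ) ∉ u1 := by
    rw [hw1, nodup_append_disj] at hnd
    exact fun h => hnd.2.2 h (by simp)
  have hnd1 : u1.Nodup := by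
    rw [hw1, nodup_append_disj] at hnd
    exact hnd.1
  have hmem1 : ∀ x, x ∈ u1 ↔ 2 ≤ x ∧ x ≤ n := by
    intro x
    constructor
    · intro hx
      have hxw : x ∈ w := by rw [hw1]; exact List.mem_append_left _ hx
      have h1 := (hmem x).1 hxw
      have : x ≠ 1 := fun he => h1nu (he ▸ hx)
      omega
    · rintro ⟨h1, h2⟩
      have : x ∈ w := (hmem x).2 ⟨by omega, h2⟩
      rw [hw1] at this
      rcases List.mem_append.1 this with h | h
      · exact h
      · simp at h; omega
  have havd1 : avoid u1 := by
    refine (avoid_append_min ?_).1 (hw1 ▸ havd)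
    intro x hx
    exact ((hmem1 x).1 hx).1
  have h2u : (2:ℕ) ∈ u1 := (hmem1 2).2 ⟨le_rfl, by omega⟩
  have hnu : (n:ℕ) ∈ u1 := (hmem1 n).2 ⟨by omega, le_rfl⟩
  have e2 : w.idxOf 2 = u1.idxOf 2 := by rw [hw1, List.idxOf_append_of_mem h2u]
  have en : w.idxOf n = u1.idxOf n := by rw [hw1, List.idxOf_append_of_mem hnu]
  have h2n1 : u1.idxOf 2 < u1.idxOf n := by omega
  obtain ⟨hdecomp, hpw, hgt, hst⟩ := decomp_two hnd1 havd1.1 h2u hnu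
    (fun x hx hxm => lt_of_le_of_ne ((hmem1 x).1 hx).2 hxm) h2n1
    (fun x hx hx1 => by have := (hmem1 x).1 hx; omega)
  set P := u1.take (u1.idxOf 2) with hP
  set R' := u1.drop (u1.idxOf n + 1) with hR'
  have hnd2 : (P ++ 2 :: n :: R').Nodup := hdecomp ▸ hnd1
  obtain ⟨hndP, hndr, hdisjP⟩ := nodup_append_disj.1 hnd2
  have h2nR : (2:ℕ) ∉ R' := fun h => (List.nodup_cons.1 hndr).1 (by simp [h])
  have hnnR : (n:ℕ) ∉ R' := fun h =>
    (List.nodup_cons.1 (List.nodup_cons.1 hndr).2).1 h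
  have hPmem : ∀ p ∈ P, 3 ≤ p ∧ p ≤ n - 1 := by
    intro p hp
    have hpu : p ∈ u1 := by rw [hdecomp]; exact List.mem_append_left _ hp
    have hb := (hmem1 p).1 hpu
    have hp2 : 2 < p := hgt p hp
    have hpn : p ≠ n := fun he => hdisjP hp (by simp [he])
    omega
  have hRmem : ∀ q ∈ R', 3 ≤ q ∧ q ≤ n - 1 := by
    intro q hq
    have hqu : q ∈ u1 := by
      rw [hdecomp]; exact List.mem_append_right _ (by simp [hq])
    have hb := (hmem1 q).1 hqu
    have hq2 : q ≠ 2 := fun he => h2nR (he ▸ hq)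
    have hqn : q ≠ n := fun he => hnnR (he ▸ hq)
    omega
  have hRi : ∃ R, R' = R ++ [i] := by
    rcases List.eq_nil_or_concat R' with h | ⟨R₀, a, ha⟩
    · exfalso
      rw [h] at hdecomp
      have : u1 = (P ++ [2]) ++ [n] := by rw [hdecomp]; simp
      rw [hu1] at this
      have := last_eq_of_concat_eq' this.symm
      omega
    · refine ⟨R₀, ?_⟩
      rw [ha] at hdecomp
      have : u1 = (P ++ 2 :: n :: R₀) ++ [a] := by rw [hdecomp]; simp
      rw [hu1] at this
      have := last_eq_of_concat_eq' this.symm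
      rw [ha, this]
      simp
  obtain ⟨R, hR⟩ := hRi
  have hi3 : 3 ≤ i := by
    have : i ∈ R' := by rw [hR]; simp
    exact (hRmem i this).1
  have hidx2 : w.idxOf 2 = P.length := by
    rw [e2, hdecomp, List.idxOf_append_of_notMem (fun h => by have := hPmem 2 h; omega)]
    simp
  refine ⟨hi3, P, R, ?_, hpw, hPmem, fun q hq => hRmem q (hR ▸ hq), ?_, hidx2, ?_⟩
  · rw [hw1, hdecomp, hR]; simp
  · rw [← hR]
    exact (avoid_structure (P := P) (Q := R') (z := 2) (N := n) hnd2 hgt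
      (fun q hq => by have := hRmem q hq; omega)
      (fun p hp => by have := hPmem p hp; omega)
      (fun q hq => by have := hRmem q hq; omega) (by omega) hpw).1 (hdecomp ▸ havd1)
  · intro y hy3 hyn
    have hwP : w = P ++ (2 :: n :: (R' ++ [1])) := by
      rw [hw1, hdecomp]; simp
    constructor
    · intro hlt
      by_contra hyP
      rw [hidx2] at hlt
      conv_lhs at hlt => rw [hwP]
      rw [List.idxOf_append_of_notMem hyP] at hlt
      omega
    · intro hyP
      rw [hidx2]
      conv_lhs => rw [hwP]
      rw [List.idxOf_append_of_mem hyP]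
      exact List.idxOf_lt_length_iff.2 hyP

lemma estat_eq {i s : ℕ} {w : List ℕ} (hs : 1 ≤ s) (hsi : s ≤ i - 2) (hi3 : 3 ≤ i)
    (hgood : ∀ y, 3 ≤ y → y ≤ s + 1 → w.idxOf y < w.idxOf 2)
    (hbad : ¬ (w.idxOf (s+2) < w.idxOf 2)) : estat i w = s - 1 := by
  unfold estat
  have he : Finset.filter (goodUpTo w) (Finset.Icc 3 i) = Finset.Icc 3 (s+1) := by
    ext x
    rw [Finset.mem_filter, Finset.mem_Icc, Finset.mem_Icc]
    unfold goodUpTo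
    constructor
    · rintro ⟨⟨h3, hxi⟩, hgd⟩
      refine ⟨h3, ?_⟩
      by_contra hx
      exact hbad (hgd (s+2) (Finset.mem_Icc.2 ⟨by omega, by omega⟩))
    · rintro ⟨h3, hx⟩
      refine ⟨⟨h3, by omega⟩, fun y hy => ?_⟩
      rw [Finset.mem_Icc] at hy
      exact hgood y hy.1 (by omega)
  rw [he, Nat.card_Icc]
  omega

lemma estat_rev {n i s : ℕ} {w : List ℕ} {P : List ℕ} (hs : 1 ≤ s) (hsi : s ≤ i - 2)
    (hi3 : 3 ≤ i) (hin : i ≤ n - 1) (hn : 3 ≤ n)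
    (goodmem : ∀ y, 3 ≤ y → y ≤ n → (w.idxOf y < w.idxOf 2 ↔ y ∈ P))
    (hiP : i ∉ P) (hest : estat i w = s - 1) :
    (∀ y, 3 ≤ y → y ≤ s + 1 → y ∈ P) ∧ (s + 2 ∉ P) := by
  unfold estat at hest
  set S := Finset.filter (goodUpTo w) (Finset.Icc 3 i) with hS
  have hsub : S ⊆ Finset.Icc 3 i := Finset.filter_subset _ _
  have hdc : ∀ x ∈ S, ∀ y, 3 ≤ y → y ≤ x → y ∈ S := by
    intro x hx y h3 hyx
    rw [hS, Finset.mem_filter] at hx ⊢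
    unfold goodUpTo at hx ⊢
    rcases hx with ⟨hx1, hx2⟩
    rw [Finset.mem_Icc] at hx1 ⊢
    refine ⟨⟨h3, by omega⟩, fun z hz => ?_⟩
    rw [Finset.mem_Icc] at hz
    exact hx2 z (Finset.mem_Icc.2 ⟨hz.1, by omega⟩)
  have hiS : i ∉ S := by
    intro h
    rw [hS, Finset.mem_filter] at h
    unfold goodUpTo at h
    exact hiP ((goodmem i hi3 (by omega)).1 (h.2 i (Finset.mem_Icc.2 ⟨hi3, le_rfl⟩)))
  have hcard : S.card ≤ i - 3 := by
    have hsub2 : S ⊆ (Finset.Icc 3 i).erase i := fun x hx =>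
      Finset.mem_erase.2 ⟨fun he => hiS (he ▸ hx), hsub hx⟩
    have := Finset.card_le_card hsub2
    rwa [Finset.card_erase_of_mem (Finset.mem_Icc.2 ⟨hi3, le_rfl⟩), Nat.card_Icc] at this
  have hmemS := mem_dc hsub hdc
  constructor
  · intro y h3 hy
    have hyS : y ∈ S := by
      rw [hmemS, hest]
      exact ⟨h3, by omega, by omega⟩
    rw [hS, Finset.mem_filter] at hyS
    unfold goodUpTo at hyS
    exact (goodmem y h3 (by omega)).1 (hyS.2 y (Finset.mem_Icc.2 ⟨h3, le_rfl⟩))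
  · intro hP
    have : s + 2 ∈ S := by
      rw [hS, Finset.mem_filter]
      unfold goodUpTo
      refine ⟨Finset.mem_Icc.2 ⟨by omega, by omega⟩, fun y hy => ?_⟩
      rw [Finset.mem_Icc] at hy
      rcases Nat.lt_or_ge y (s+2) with h | h
      · have hyS : y ∈ S := by
          rw [hmemS, hest]
          exact ⟨hy.1, by omega, by omega⟩
        rw [hS, Finset.mem_filter] at hyS
        unfold goodUpTo at hyS
        exact hyS.2 y (Finset.mem_Icc.2 ⟨hy.1, le_rfl⟩)
      · have hy2 : y = s + 2 := by omega
        subst hy2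
        exact (goodmem (s+2) (by omega) (by omega)).2 hP
    rw [hmemS, hest] at this
    omega

/-- splitting the decreasing prefix into its big part and the block -/
lemma P_split {s : ℕ} {P : List ℕ} (hs : 1 ≤ s) (hpw : List.Pairwise (· > ·) P)
    (hP3 : ∀ p ∈ P, 3 ≤ p) (hblk : ∀ y, 3 ≤ y → y ≤ s + 1 → y ∈ P) :
    P = P.filter (fun x => decide (s + 1 < x)) ++ blockL s := by
  haveI : IsAntisymm ℕ (· > ·) := ⟨fun a b h1 h2 => by omega⟩
  have hndP : P.Nodup := hpw.imp (fun h => Nat.ne_of_gt h)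
  have hperm1 : (P.filter (fun x => decide (s + 1 < x)) ++
      P.filter (fun x => !(decide (s + 1 < x)))).Perm P := List.filter_append_perm _ P
  have hsmall : P.filter (fun x => !(decide (s + 1 < x))) = blockL s := by
    refine eq_of_perm_of_sorted_old ?_ (hpw.filter _) blockL_pairwise
    rw [List.perm_ext_iff_of_nodup (hndP.filter _) blockL_nodup]
    intro x
    rw [List.mem_filter, mem_blockL hs]
    constructor
    · rintro ⟨hx, hb⟩
      simp at hb
      exact ⟨hP3 x hx, by omega⟩
    · rintro ⟨h3, hx⟩
      exact ⟨hblk x h3 hx, by simp; omega⟩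
  refine eq_of_perm_of_sorted_old ?_ hpw ?_
  · rw [← hsmall]
    exact hperm1.symm
  · refine List.pairwise_append.2 ⟨hpw.filter _, blockL_pairwise, fun a ha b hb => ?_⟩
    rw [List.mem_filter] at ha
    rw [mem_blockL hs] at hb
    have := ha.2
    simp at this
    omega

end Term2Struct
section Term2Maps

def g2 (n s : ℕ) : List ℕ → List ℕ := fun c =>
  ((c.take (c.idxOf 1)).map (ρf s) ++ blockL s) ++
    2 :: n :: ((c.drop (c.idxOf 1 + 2)).map (ρf s) ++ [1])

def f2 (n s : ℕ) : List ℕ → List ℕ := fun w =>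
  ((w.take (w.idxOf 2)).filter (fun x => decide (s + 1 < x))).map (· - s) ++
    1 :: (n - s) :: ((w.drop (w.idxOf 2 + 2)).dropLast.map (· - s))

lemma g2_props {n i d : ℕ} (hn : 3 ≤ n) (hi : i ≤ n - 1) (hi3 : 3 ≤ i)
    (hd2 : 2 ≤ d) (hdi : d ≤ i - 1) :
    ∀ c ∈ CdTot (n - i + d) d,
      g2 n (i - d) c ∈ S2dset n i d ∧ f2 n (i - d) (g2 n (i - d) c) = c := by
  intro c hc
  set s := i - d with hsdef
  set m := n - i + d with hmdef
  have hs1 : 1 ≤ s := by omega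
  have hsi : s ≤ i - 2 := by omega
  have hm3 : 3 ≤ m := by omega
  have hnm : n = m + s := by omega
  have hdm : d ≤ m - 1 := by omega
  obtain ⟨hperm, havd, hne, h1m, hm2, u, hu⟩ := mem_CdTot.1 hc
  obtain ⟨hndc, hmemc⟩ := isPermOf_iff.1 hperm
  have hlenc : c.length = m := hperm.len
  obtain ⟨γ, R, hdecomp, hpw, hγb, hRb, h2R, ⟨R₀, hR₀⟩, hPQ⟩ := C_decomp hm3 hd2 hdm hc
  set ρ := ρf s with hρ
  have hρmono := ρf_strictMono hs1
  have hidx1 : c.idxOf 1 = γ.length := by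
    rw [hdecomp, List.idxOf_append_of_notMem (fun h => by have := hγb 1 h; omega)]
    simp
  have htake : c.take (c.idxOf 1) = γ := by
    rw [hidx1, hdecomp, List.take_left]
  have hdrop : c.drop (c.idxOf 1 + 2) = R := by
    have h2 : c = (γ ++ [1, m]) ++ R := by rw [hdecomp]; simp
    rw [hidx1, h2, List.drop_left' (by simp)]
  set A : List ℕ := γ.map ρ ++ blockL s with hA
  set Rρ : List ℕ := R.map ρ with hRρ
  have hg2 : g2 n s c = A ++ 2 :: n :: (Rρ ++ [1]) := by
    simp only [g2, htake, hdrop, hA, hRρ, hρ]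
  have hγρb : ∀ x ∈ γ.map ρ, s + 3 ≤ x ∧ x ≤ n - 1 := by
    intro x hx
    rcases List.mem_map.1 hx with ⟨y, hy, rfl⟩
    have hb := hγb y hy
    rw [hρ, ρf_big (by omega)]
    omega
  have hRρb : ∀ x ∈ Rρ, s + 2 ≤ x ∧ x ≤ n - 1 := by
    intro x hx
    rcases List.mem_map.1 hx with ⟨y, hy, rfl⟩
    have hb := hRb y hy
    rw [hρ, ρf_big (by omega)]
    omega
  have hAb : ∀ x ∈ A, 3 ≤ x ∧ x ≤ n - 1 := by
    intro x hx
    rcases List.mem_append.1 hx with h | h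
    · have := hγρb x h; omega
    · rw [mem_blockL hs1] at h; omega
  -- nodup facts
  have hnd2 : (γ ++ 1 :: m :: R).Nodup := hdecomp ▸ hndc
  obtain ⟨hndγ, hndr, hdisjγ⟩ := nodup_append_disj.1 hnd2
  have hndR : R.Nodup := ((List.nodup_cons.1 (List.nodup_cons.1 hndr).2).2)
  have hndγρ : (γ.map ρ).Nodup := hndγ.map_on (fun x _ y _ h => hρmono.injective h)
  have hndRρ : Rρ.Nodup := hndR.map_on (fun x _ y _ h => hρmono.injective h)
  have hndA : A.Nodup := by
    rw [hA, nodup_append_disj]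
    refine ⟨hndγρ, blockL_nodup, fun a ha hb => ?_⟩
    rw [mem_blockL hs1] at hb
    have := hγρb a ha
    omega
  have hdisjγR : ∀ x ∈ γ, x ∉ R := fun x hx hxR => hdisjγ hx (by simp [hxR])
  have hndw : (A ++ 2 :: n :: (Rρ ++ [1])).Nodup := by
    rw [nodup_append_disj]
    refine ⟨hndA, ?_, ?_⟩
    · rw [List.nodup_cons, List.nodup_cons, nodup_append_disj]
      refine ⟨?_, ?_, hndRρ, List.nodup_singleton 1, ?_⟩
      · intro h
        rcases List.mem_cons.1 h with h | h
        · omega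
        rcases List.mem_append.1 h with h | h
        · have := hRρb 2 h; omega
        · simp at h
      · intro h
        rcases List.mem_append.1 h with h | h
        · have := hRρb n h; omega
        · simp at h; omega
      · intro a ha hb
        simp at hb
        subst hb
        have := hRρb 1 ha
        omega
    · intro a ha hb
      have hab := hAb a ha
      rcases List.mem_cons.1 hb with h | h
      · omega
      rcases List.mem_cons.1 h with h | h
      · omega
      rcases List.mem_append.1 h with h | h
      · -- a in A and in Rρ
        rcases List.mem_append.1 ha with ha' | ha'
        · rcases List.mem_map.1 ha' with ⟨y, hy, rfl⟩
          rcases List.mem_map.1 h with ⟨z, hz, hez⟩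
          have : y = z := hρmono.injective hez.symm
          exact hdisjγR y hy (this ▸ hz)
        · rw [mem_blockL hs1] at ha'
          have := hRρb a h
          omega
      · simp at h
        omega
  -- index computations
  have h2nA : (2:ℕ) ∉ A := fun h => by have := hAb 2 h; omega
  have hnnA : (n:ℕ) ∉ A := fun h => by have := hAb n h; omega
  have idx2 : (A ++ 2 :: n :: (Rρ ++ [1])).idxOf 2 = A.length := by
    rw [List.idxOf_append_of_notMem h2nA]
    simp
  have idxn : (A ++ 2 :: n :: (Rρ ++ [1])).idxOf n = A.length + 1 := by
    rw [List.idxOf_append_of_notMem hnnA,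
      List.idxOf_cons_ne _ (by omega : (2:ℕ) ≠ n), List.idxOf_cons_self]
  have h1nRρ : (1:ℕ) ∉ Rρ := fun h => by have := hRρb 1 h; omega
  have idx1w : (A ++ 2 :: n :: (Rρ ++ [1])).idxOf 1 = A.length + 2 + Rρ.length := by
    rw [List.idxOf_append_of_notMem (fun h => by have := hAb 1 h; omega),
      List.idxOf_cons_ne _ (by omega : (2:ℕ) ≠ 1),
      List.idxOf_cons_ne _ (by omega : (n:ℕ) ≠ 1),
      List.idxOf_append_of_notMem h1nRρ]
    simp
    omega
  have hlenw : (A ++ 2 :: n :: (Rρ ++ [1])).length = n := by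
    have h1 : γ.length + 2 + R.length = m := by
      have := congrArg List.length hdecomp
      simp at this
      omega
    simp [hA, hRρ, blockL_length]
    omega
  constructor
  · -- membership in S2dset
    rw [hg2]
    refine ⟨mem_Bnij.2 ⟨?_, ?_, ?_, ?_, ?_⟩, ?_, ?_⟩
    · -- IsPermOf
      refine isPermOf_of hndw ?_ hlenw
      intro x hx
      rcases List.mem_append.1 hx with h | h
      · have := hAb x h; omega
      rcases List.mem_cons.1 h with h | h
      · omega
      rcases List.mem_cons.1 h with h | h
      · omega
      rcases List.mem_append.1 h with h | h
      · have := hRρb x h; omega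
      · simp at h; omega
    · -- avoid
      have hassoc : A ++ 2 :: n :: (Rρ ++ [1]) = (A ++ 2 :: n :: Rρ) ++ [1] := by simp
      rw [hassoc]
      refine (avoid_append_min ?_).2 ?_
      · intro x hx
        rcases List.mem_append.1 hx with h | h
        · have := hAb x h; omega
        rcases List.mem_cons.1 h with h | h
        · omega
        rcases List.mem_cons.1 h with h | h
        · omega
        · have := hRρb x h; omega
      · refine (avoid_structure (P := A) (Q := Rρ) (z := 2) (N := n) ?_
          (fun p hp => by have := hAb p hp; omega)
          (fun q hq => by have := hRρb q hq; omega)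
          (fun p hp => by have := hAb p hp; omega)
          (fun q hq => by have := hRρb q hq; omega) (by omega) ?_).2 ?_
        · have : ((A ++ 2 :: n :: Rρ) ++ [1]).Nodup := by
            rw [← hassoc]; exact hndw
          rw [nodup_append_disj] at this
          exact this.1
        · -- pairwise A
          rw [hA]
          refine List.pairwise_append.2 ⟨?_, blockL_pairwise, ?_⟩
          · exact List.pairwise_map.2 (hpw.imp_of_mem (fun _ _ h => hρmono h))
          · intro a ha b hb
            rw [mem_blockL hs1] at hb
            have := hγρb a ha
            omega
        · -- PQcond A Rρ
          refine PQcond_map (fun x _ y _ => hρmono.lt_iff_lt.symm) ?_ hPQ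
          intro p hp cc hcc hasc
          have hyR : R.getD (cc+1) 0 ∈ R := mem_getD (by omega)
          have hxR : R.getD cc 0 ∈ R := mem_getD (by omega)
          have hy3 : 3 ≤ R.getD (cc+1) 0 := by
            have := hRb _ hxR
            omega
          have hρy : ρ (R.getD (cc+1) 0) = R.getD (cc+1) 0 + s := ρf_big (by omega)
          rcases List.mem_append.1 hp with h | h
          · rcases List.mem_map.1 h with ⟨y, hy, rfl⟩
            exact hρmono ((hPQ cc hcc hasc).2.2 y hy)
          · rw [mem_blockL hs1] at h
            omega
    · -- not excluded
      have hassoc : A ++ 2 :: n :: (Rρ ++ [1]) = (A ++ 2 :: n :: Rρ) ++ [1] := by simp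
      exact ne_excluded_of_last (by omega) hassoc
    · omega
    · -- ends in [i, 1]
      refine ⟨A ++ 2 :: n :: R₀.map ρ, ?_⟩
      have : Rρ = R₀.map ρ ++ [i] := by
        rw [hRρ, hR₀, List.map_append]
        simp only [List.map_cons, List.map_nil]
        rw [hρ, ρf_big (by omega)]
        congr 2
        omega
      rw [this]
      simp
    · omega
    · -- estat
      have hest : estat i (A ++ 2 :: n :: (Rρ ++ [1])) = s - 1 := by
        refine estat_eq hs1 hsi hi3 ?_ ?_
        · intro y hy3 hys
          have hyA : y ∈ A := by
            rw [hA]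
            exact List.mem_append_right _ ((mem_blockL hs1).2 ⟨hy3, hys⟩)
          rw [idx2, List.idxOf_append_of_mem hyA]
          exact List.idxOf_lt_length_iff.2 hyA
        · rw [idx2, List.idxOf_append_of_notMem (fun h => ?_)]
          · omega
          · rcases List.mem_append.1 h with h | h
            · have := hγρb _ h; omega
            · rw [mem_blockL hs1] at h; omega
      rw [hest]
      omega
  · -- f2 ∘ g2 = id
    rw [hg2]
    simp only [f2]
    rw [idx2, List.take_left]
    have hfilt : A.filter (fun x => decide (s + 1 < x)) = γ.map ρ := by
      rw [hA, List.filter_append]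
      have h1 : (γ.map ρ).filter (fun x => decide (s + 1 < x)) = γ.map ρ :=
        List.filter_eq_self.2 (fun a ha => by
          simp only [decide_eq_true_eq]
          have := hγρb a ha; omega)
      have h2 : (blockL s).filter (fun x => decide (s + 1 < x)) = [] :=
        List.filter_eq_nil_iff.2 (fun a ha => by
          simp only [decide_eq_true_eq]
          rw [mem_blockL hs1] at ha; omega)
      rw [h1, h2, List.append_nil]
    rw [hfilt]
    have hγback : (γ.map ρ).map (· - s) = γ := by
      rw [List.map_map]
      conv_rhs => rw [← List.map_id γ]
      refine List.map_congr_left (fun x hx => ?_)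
      have := hγb x hx
      simp only [Function.comp_apply, hρ, ρf_big (show 2 ≤ x by omega), id_eq]
      omega
    have hdropw : (A ++ 2 :: n :: (Rρ ++ [1])).drop (A.length + 2) = Rρ ++ [1] := by
      have h2 : A ++ 2 :: n :: (Rρ ++ [1]) = (A ++ [2, n]) ++ (Rρ ++ [1]) := by simp
      rw [h2, List.drop_left' (by simp)]
    rw [hdropw, List.dropLast_concat]
    have hRback : Rρ.map (· - s) = R := by
      rw [hRρ, List.map_map]
      conv_rhs => rw [← List.map_id R]
      refine List.map_congr_left (fun x hx => ?_)
      have := hRb x hx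
      simp only [Function.comp_apply, hρ, ρf_big (show 2 ≤ x by omega), id_eq]
      omega
    rw [hγback, hRback]
    have hms : n - s = m := by omega
    rw [hms, ← hdecomp]

end Term2Maps
section Term2Back

lemma f2_props {n i d : ℕ} (hn : 3 ≤ n) (hi : i ≤ n - 1) (hi2 : 2 ≤ i)
    (hd2 : 2 ≤ d) (hdi : d ≤ i - 1) :
    ∀ w ∈ S2dset n i d,
      f2 n (i - d) w ∈ CdTot (n - i + d) d ∧ g2 n (i - d) (f2 n (i - d) w) = w := by
  rintro w ⟨hw, h2n, hest⟩
  set s := i - d with hsdef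
  set m := n - i + d with hmdef
  have hs1 : 1 ≤ s := by omega
  have hsi : s ≤ i - 2 := by omega
  have hm3 : 3 ≤ m := by omega
  have hnm : n = m + s := by omega
  have hdm : d ≤ m - 1 := by omega
  obtain ⟨hperm, havd, hne, hidx, u, hu⟩ := mem_Bnij.1 hw
  obtain ⟨hndw, hmemw⟩ := isPermOf_iff.1 hperm
  have hlenw : w.length = n := hperm.len
  obtain ⟨hi3, P, R, hdecomp0, hpw, hPb, hQb, hPQ, hidx2, goodmem⟩ :=
    S2_decomp hn hi2 hi hw h2n
  set Q : List ℕ := R ++ [i] with hQdef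
  have hdecompw : w = P ++ 2 :: n :: (Q ++ [1]) := hdecomp0
  -- nodup pieces
  have hndw2 : (P ++ 2 :: n :: (Q ++ [1])).Nodup := hdecompw ▸ hndw
  obtain ⟨hndP, hndrest, hdisjP⟩ := nodup_append_disj.1 hndw2
  have hndQ1 : (Q ++ [1]).Nodup :=
    (List.nodup_cons.1 (List.nodup_cons.1 hndrest).2).2
  have hndQ : Q.Nodup := (nodup_append_disj.1 hndQ1).1
  have hdisjPQ : ∀ x ∈ P, x ∉ Q := by
    intro x hx hxQ
    exact hdisjP hx (by simp [hxQ])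
  have hiQ : i ∈ Q := by rw [hQdef]; simp
  have hiP : i ∉ P := fun h => hdisjPQ i h hiQ
  have hest' : estat i w = s - 1 := by rw [hest]; omega
  obtain ⟨hblk, hs2P⟩ := estat_rev hs1 hsi hi3 hi hn goodmem hiP hest'
  set Pbig : List ℕ := P.filter (fun x => decide (s + 1 < x)) with hPbig
  have hPeq : P = Pbig ++ blockL s :=
    P_split hs1 hpw (fun p hp => (hPb p hp).1) hblk
  have hPbig_b : ∀ x ∈ Pbig, s + 3 ≤ x ∧ x ≤ n - 1 := by
    intro x hx
    rw [hPbig, List.mem_filter] at hx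
    have h1 := hPb x hx.1
    have h2 := hx.2
    simp only [decide_eq_true_eq] at h2
    have : x ≠ s + 2 := fun he => hs2P (he ▸ hx.1)
    omega
  have hQb' : ∀ q ∈ Q, s + 2 ≤ q ∧ q ≤ n - 1 := by
    intro q hq
    have h1 := hQb q hq
    have : ¬ (q ≤ s + 1) := fun hle => hdisjPQ q (hblk q h1.1 hle) hq
    omega
  set σ : ℕ → ℕ := (· - s) with hσ
  set Qσ : List ℕ := Q.map σ with hQσ
  set Pσ : List ℕ := Pbig.map σ with hPσ
  have hPσb : ∀ x ∈ Pσ, 3 ≤ x ∧ x ≤ m - 1 := by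
    intro x hx
    rcases List.mem_map.1 hx with ⟨y, hy, rfl⟩
    have := hPbig_b y hy
    simp only [hσ]
    omega
  have hQσb : ∀ x ∈ Qσ, 2 ≤ x ∧ x ≤ m - 1 := by
    intro x hx
    rcases List.mem_map.1 hx with ⟨y, hy, rfl⟩
    have := hQb' y hy
    simp only [hσ]
    omega
  -- computing f2
  have htake : w.take (w.idxOf 2) = P := by
    rw [hidx2]
    conv_lhs => rw [hdecompw]
    exact List.take_left
  have hdropw : w.drop (w.idxOf 2 + 2) = Q ++ [1] := by
    rw [hidx2]
    have h2 : w = (P ++ [2, n]) ++ (Q ++ [1]) := by rw [hdecompw]; simp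
    conv_lhs => rw [h2]
    exact List.drop_left' (by simp)
  have hf2 : f2 n s w = Pσ ++ 1 :: m :: Qσ := by
    simp only [f2, htake, hdropw, List.dropLast_concat]
    rw [← hPbig, ← hPσ, ← hQσ]
    have hms : n - s = m := by omega
    rw [hms]
  -- nodup of the image
  have hndPbig : Pbig.Nodup := hndP.filter _
  have hndPσ : Pσ.Nodup := hndPbig.map_on (fun x hx y hy h => by
    have := hPbig_b x hx; have := hPbig_b y hy
    simp only [hσ] at h
    omega)
  have hndQσ : Qσ.Nodup := hndQ.map_on (fun x hx y hy h => by
    have := hQb' x hx; have := hQb' y hy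
    simp only [hσ] at h
    omega)
  have hndc : (Pσ ++ 1 :: m :: Qσ).Nodup := by
    rw [nodup_append_disj]
    refine ⟨hndPσ, ?_, ?_⟩
    · rw [List.nodup_cons, List.nodup_cons]
      refine ⟨?_, ?_, hndQσ⟩
      · intro h
        rcases List.mem_cons.1 h with h | h
        · omega
        · have := hQσb 1 h; omega
      · intro h
        have := hQσb m h; omega
    · intro a ha hb
      have hab := hPσb a ha
      rcases List.mem_cons.1 hb with h | h
      · omega
      rcases List.mem_cons.1 h with h | h
      · omega
      · -- a ∈ Pσ and a ∈ Qσ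
        rcases List.mem_map.1 ha with ⟨x, hx, rfl⟩
        rcases List.mem_map.1 h with ⟨y, hy, hey⟩
        have hx1 := hPbig_b x hx
        have hy1 := hQb' y hy
        have : x = y := by simp only [hσ] at hey ⊢; omega
        have hxP : x ∈ P := by rw [hPeq]; exact List.mem_append_left _ hx
        exact hdisjPQ x hxP (this ▸ hy)
  have hlenP : P.length = Pbig.length + (s - 1) := by
    have := congrArg List.length hPeq
    simpa [blockL_length] using this
  have hlenw2 : P.length + 2 + Q.length + 1 = n := by
    have := congrArg List.length hdecompw
    simp at this
    omega
  -- index computations in the image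
  have h1nPσ : (1:ℕ) ∉ Pσ := fun h => by have := hPσb 1 h; omega
  have idx1c : (Pσ ++ 1 :: m :: Qσ).idxOf 1 = Pσ.length := by
    rw [List.idxOf_append_of_notMem h1nPσ]
    simp
  have idxmc : (Pσ ++ 1 :: m :: Qσ).idxOf m = Pσ.length + 1 := by
    rw [List.idxOf_append_of_notMem (fun h => by have := hPσb m h; omega),
      List.idxOf_cons_ne _ (by omega : (1:ℕ) ≠ m), List.idxOf_cons_self]
  have idx2c : (Pσ ++ 1 :: m :: Qσ).idxOf 2 = Pσ.length + 2 + Qσ.idxOf 2 := by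
    rw [List.idxOf_append_of_notMem (fun h => by have := hPσb 2 h; omega),
      List.idxOf_cons_ne _ (by omega : (1:ℕ) ≠ 2),
      List.idxOf_cons_ne _ (by omega : (m:ℕ) ≠ 2)]
    omega
  constructor
  · -- membership in CdTot
    rw [hf2]
    refine mem_CdTot.2 ⟨?_, ?_, ?_, ?_, ?_, ?_⟩
    · refine isPermOf_of hndc ?_ ?_
      · intro x hx
        rcases List.mem_append.1 hx with h | h
        · have := hPσb x h; omega
        rcases List.mem_cons.1 h with h | h
        · omega
        rcases List.mem_cons.1 h with h | h
        · omega
        · have := hQσb x h; omega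
      · rw [hPσ, hQσ]
        simp only [List.length_append, List.length_cons, List.length_map]
        omega
    · -- avoid
      refine (avoid_structure (P := Pσ) (Q := Qσ) (z := 1) (N := m) hndc
        (fun p hp => by have := hPσb p hp; omega)
        (fun q hq => by have := hQσb q hq; omega)
        (fun p hp => by have := hPσb p hp; omega)
        (fun q hq => by have := hQσb q hq; omega) (by omega) ?_).2 ?_
      · exact List.pairwise_map.2 ((hpw.filter _).imp_of_mem (fun {a b} ha hb h => by
          have := hPbig_b a ha; have := hPbig_b b hb
          simp only [hσ]
          omega))
      · refine PQcond_map (fun x hx y hy => ?_) ?_ hPQ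
        · have := hQb' x hx; have := hQb' y hy
          simp only [hσ]
          omega
        · intro p hp cc hcc hasc
          rcases List.mem_map.1 hp with ⟨p₀, hp₀, rfl⟩
          have hyQ : Q.getD (cc+1) 0 ∈ Q := mem_getD (by omega)
          have hy := hQb' _ hyQ
          have hp₀b := hPbig_b p₀ hp₀
          have hp₀P : p₀ ∈ P := by rw [hPeq]; exact List.mem_append_left _ hp₀
          have := (hPQ cc hcc hasc).2.2 p₀ hp₀P
          simp only [hσ]
          omega
    · -- not excluded
      have hQi : Qσ = R.map σ ++ [d] := by
        rw [hQσ, hQdef, List.map_append]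
        simp only [List.map_cons, List.map_nil]
        congr 2
        simp only [hσ]
        omega
      refine ne_excluded_of_last (by omega : d ≠ m) (u := Pσ ++ 1 :: m :: R.map σ) ?_
      rw [hQi]
      simp
    · -- indexOf 1 < indexOf m
      omega
    · -- indexOf m < indexOf 2
      rw [idxmc, idx2c]
      omega
    · -- ends with d
      have hQi : Qσ = R.map σ ++ [d] := by
        rw [hQσ, hQdef, List.map_append]
        simp only [List.map_cons, List.map_nil]
        congr 2
        simp only [hσ]
        omega
      refine ⟨Pσ ++ 1 :: m :: R.map σ, ?_⟩
      rw [hQi]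
      simp
  · -- g2 ∘ f2 = id
    rw [hf2]
    simp only [g2]
    rw [idx1c, List.take_left]
    have h2 : Pσ ++ 1 :: m :: Qσ = (Pσ ++ [1, m]) ++ Qσ := by simp
    rw [h2, List.drop_left' (by simp)]
    have hPback : Pσ.map (ρf s) = Pbig := by
      rw [hPσ, List.map_map]
      conv_rhs => rw [← List.map_id Pbig]
      refine List.map_congr_left (fun x hx => ?_)
      have := hPbig_b x hx
      simp only [Function.comp_apply, hσ, id_eq]
      rw [ρf_big (by omega)]
      omega
    have hQback : Qσ.map (ρf s) = Q := by
      rw [hQσ, List.map_map]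
      conv_rhs => rw [← List.map_id Q]
      refine List.map_congr_left (fun x hx => ?_)
      have := hQb' x hx
      simp only [Function.comp_apply, hσ, id_eq]
      rw [ρf_big (by omega)]
      omega
    rw [hPback, hQback, ← hPeq, ← hdecompw]

end Term2Back
section Assembly

lemma term2_count {n i d : ℕ} (hn : 3 ≤ n) (hi2 : 2 ≤ i) (hi : i ≤ n - 1)
    (hd2 : 2 ≤ d) (hdi : d ≤ i - 1) :
    (S2dset n i d).ncard =
      ∑ k ∈ (Finset.Icc 1 (n - i + d)).erase d, ccount (n - i + d) k d := by
  have hi3 : 3 ≤ i := by omega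
  set m := n - i + d with hm
  have hm3 : 3 ≤ m := by omega
  have hinv : Set.InvOn (f2 n (i-d)) (g2 n (i-d)) (CdTot m d) (S2dset n i d) :=
    ⟨fun c hc => (g2_props hn hi hi3 hd2 hdi c hc).2,
     fun w hw => (f2_props hn hi hi2 hd2 hdi w hw).2⟩
  have hbij : Set.BijOn (g2 n (i-d)) (CdTot m d) (S2dset n i d) :=
    hinv.bijOn (fun c hc => (g2_props hn hi hi3 hd2 hdi c hc).1)
      (fun w hw => (f2_props hn hi hi2 hd2 hdi w hw).1)
  have h1 : (S2dset n i d).ncard = (CdTot m d).ncard := by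
    rw [← hbij.image_eq, Set.ncard_image_of_injOn hbij.injOn]
  rw [h1]
  have hdecomp : CdTot m d = ⋃ k ∈ (Finset.Icc 1 m).erase d, Cnij m k d := by
    ext c
    simp only [Set.mem_iUnion, exists_prop]
    constructor
    · intro hc
      obtain ⟨hperm, havd, hne, h1m, hm2, u, hu⟩ := mem_CdTot.1 hc
      obtain ⟨hnd, hmem⟩ := isPermOf_iff.1 hperm
      have hlen : c.length = m := hperm.len
      have hunil : u ≠ [] := by
        intro h
        rw [h] at hu
        rw [hu] at hlen
        simp at hlen
        omega
      rcases List.eq_nil_or_concat u with h | ⟨u0, k, hk⟩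
      · exact absurd h hunil
      refine ⟨k, ?_, ?_⟩
      · have hkc : k ∈ c := by rw [hu, hk]; simp
        have hbound := (hmem k).1 hkc
        have hkd : k ≠ d := by
          have : c = u0 ++ [k, d] := by rw [hu, hk]; simp
          rw [this] at hnd
          have hsl : [k, d].Sublist (u0 ++ [k, d]) := List.sublist_append_right u0 _
          have := hsl.nodup hnd
          simp at this
          exact this
        exact Finset.mem_erase.2 ⟨hkd, Finset.mem_Icc.2 hbound⟩
      · rw [mem_Cnij]
        exact ⟨hperm, havd, hne, h1m, hm2, u0, by rw [hu, hk]; simp⟩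
    · rintro ⟨k, hk, hc⟩
      obtain ⟨hperm, havd, hne, h1m, hm2, u, hu⟩ := mem_Cnij.1 hc
      rw [mem_CdTot]
      exact ⟨hperm, havd, hne, h1m, hm2, u ++ [k], by rw [hu]; simp⟩
  rw [hdecomp, ncard_biUnion]
  · rfl
  · intro k _
    exact finite_of_subset_perm (fun c hc => (mem_Cnij.1 hc).1)
  · intro k _ l _ hkl
    rw [Set.disjoint_left]
    intro c hck hcl
    obtain ⟨_, _, _, _, _, u, hu⟩ := mem_Cnij.1 hck
    obtain ⟨_, _, _, _, _, u', hu'⟩ := mem_Cnij.1 hcl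
    exact hkl (pair_suffix_inj (hu ▸ hu')).1

lemma partitionB {n i : ℕ} (hn : 3 ≤ n) (hi2 : 2 ≤ i) (hi : i ≤ n - 1) :
    Bnij n i 1 = S1set n i ∪ ⋃ d ∈ Finset.Icc 2 (i - 1), S2dset n i d := by
  ext w
  simp only [Set.mem_union, Set.mem_iUnion, exists_prop]
  constructor
  · intro hw
    obtain ⟨hperm, havd, hne, hidx, u, hu⟩ := mem_Bnij.1 hw
    obtain ⟨hnd, hmem⟩ := isPermOf_iff.1 hperm
    have h2w : (2:ℕ) ∈ w := (hmem 2).2 ⟨by omega, by omega⟩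
    have hnw : (n:ℕ) ∈ w := (hmem n).2 ⟨by omega, le_rfl⟩
    have h2n : w.idxOf 2 ≠ w.idxOf n := by
      intro he
      have h1 : w.getD (w.idxOf 2) 0 = 2 := by
        rw [List.getD_eq_getElem _ _ (List.idxOf_lt_length_iff.2 h2w)]
        exact List.getElem_idxOf _
      have h2 : w.getD (w.idxOf n) 0 = n := by
        rw [List.getD_eq_getElem _ _ (List.idxOf_lt_length_iff.2 hnw)]
        exact List.getElem_idxOf _
      rw [he] at h1
      omega
    rcases Nat.lt_or_ge (w.idxOf n) (w.idxOf 2) with h | h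
    · exact Or.inl ⟨hw, h⟩
    · have h2n' : w.idxOf 2 < w.idxOf n := by omega
      right
      obtain ⟨hi3, P, R, hdecomp0, hpw, hPb, hQb, hPQ, hidx2, goodmem⟩ :=
        S2_decomp hn hi2 hi hw h2n'
      have hndw2 : (P ++ 2 :: n :: ((R ++ [i]) ++ [1])).Nodup := hdecomp0 ▸ hnd
      obtain ⟨hndP, hndrest, hdisjP⟩ := nodup_append_disj.1 hndw2
      have hiP : i ∉ P := by
        intro h
        exact hdisjP h (by simp)
      have hestb : estat i w ≤ i - 3 := by
        unfold estat
        have hsub2 : Finset.filter (goodUpTo w) (Finset.Icc 3 i)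
            ⊆ (Finset.Icc 3 i).erase i := by
          intro x hx
          rw [Finset.mem_filter] at hx
          refine Finset.mem_erase.2 ⟨?_, hx.1⟩
          intro he
          subst he
          have hgd : w.idxOf x < w.idxOf 2 :=
            hx.2 x (Finset.mem_Icc.2 ⟨hi3, le_rfl⟩)
          exact hiP ((goodmem x hi3 (by omega)).1 hgd)
        have := Finset.card_le_card hsub2
        rwa [Finset.card_erase_of_mem (Finset.mem_Icc.2 ⟨hi3, le_rfl⟩),
          Nat.card_Icc] at this
      refine ⟨i - 1 - estat i w, Finset.mem_Icc.2 ⟨by omega, by omega⟩, hw, h2n', by omega⟩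
  · rintro (⟨hw, -⟩ | ⟨d, -, hw, -, -⟩) <;> exact hw

theorem stmt17' (n i : ℕ) (hn : 3 ≤ n) (hi2 : 2 ≤ i) (hi : i ≤ n - 1) :
    bcount n i 1 =
      (∑ k ∈ (Finset.Icc 1 (n - 1)).erase (i - 1), bcount (n - 1) k (i - 1)) +
      ∑ d ∈ Finset.Icc 2 (i - 1),
        ∑ k ∈ (Finset.Icc 1 (n - i + d)).erase d, ccount (n - i + d) k d := by
  have hfinS1 : (S1set n i).Finite :=
    finite_of_subset_perm (n := n) (fun w hw => (mem_Bnij.1 hw.1).1)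
  have hfinS2 : ∀ d ∈ Finset.Icc 2 (i-1), (S2dset n i d).Finite := by
    intro d _
    exact finite_of_subset_perm (n := n) (fun w hw => (mem_Bnij.1 hw.1).1)
  have hdisj2 : ∀ d ∈ Finset.Icc 2 (i-1), ∀ e ∈ Finset.Icc 2 (i-1), d ≠ e →
      Disjoint (S2dset n i d) (S2dset n i e) := by
    intro d hd e he hde
    rw [Finset.mem_Icc] at hd he
    rw [Set.disjoint_left]
    rintro w ⟨-, -, h1⟩ ⟨-, -, h2⟩
    rw [h1] at h2
    omega
  have hdisj1 : Disjoint (S1set n i) (⋃ d ∈ Finset.Icc 2 (i-1), S2dset n i d) := by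
    rw [Set.disjoint_iUnion₂_right]
    intro d _
    rw [Set.disjoint_left]
    rintro w ⟨-, h1⟩ ⟨-, h2, -⟩
    omega
  have hfinU : (⋃ d ∈ Finset.Icc 2 (i-1), S2dset n i d).Finite := by
    rw [← Finset.set_biUnion_coe]
    exact Set.Finite.biUnion (Finset.Icc 2 (i-1)).finite_toSet (by simpa using hfinS2)
  rw [bcount, partitionB hn hi2 hi, Set.ncard_union_eq hdisj1 hfinS1 hfinU,
    ncard_biUnion hfinS2 hdisj2, term1_count hn hi2 hi]
  congr 1
  refine Finset.sum_congr rfl (fun d hd => ?_)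
  rw [Finset.mem_Icc] at hd
  exact term2_count hn hi2 hi hd.1 hd.2

end Assembly
theorem stmt17 (n i : ℕ) (hn : 3 ≤ n) (hi2 : 2 ≤ i) (hi : i ≤ n - 1) :
    bcount n i 1 =
      (∑ k ∈ (Finset.Icc 1 (n - 1)).erase (i - 1), bcount (n - 1) k (i - 1)) +
      ∑ d ∈ Finset.Icc 2 (i - 1),
        ∑ k ∈ (Finset.Icc 1 (n - i + d)).erase d, ccount (n - i + d) k d :=
  stmt17' n i hn hi2 hi
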